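/- arXiv:0802.3930 — 3 statements merged into one kernel-verified Lean document; each statement's English description precedes it below -/
import Mathlib

section
/- For every monotone decreasing sequence (α_n) of positive real numbers tending to 0, there exists f ∈ Diff₀[0,1] such that the fixed-point set of f is exactly {0,1}, γ(f) = 1, and Γ_n(f) ≥ e^{α_n · n} for all n ∈ ℕ. -/
open Set Filter

/-- The sup norm over `[0,1]` of the derivative (within `[0,1]`) of a map. -/
noncomputable def supAbsDeriv (f : ℝ → ℝ) : ℝ :=
  sSup ((fun x => |derivWithin f (Set.Icc (0:ℝ) 1) x|) '' Set.Icc (0:ℝ) 1)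

/-- `IsDiff01 f g` says that `f` is a `C¹` diffeomorphism of `[0,1]` fixing `0` and `1`,
with everywhere positive derivative, and `g` is its inverse. -/
structure IsDiff01 (f g : ℝ → ℝ) : Prop where
  mapsTo : Set.MapsTo f (Set.Icc (0:ℝ) 1) (Set.Icc (0:ℝ) 1)
  inv_mapsTo : Set.MapsTo g (Set.Icc (0:ℝ) 1) (Set.Icc (0:ℝ) 1)
  left_inv : ∀ x ∈ Set.Icc (0:ℝ) 1, g (f x) = x
  right_inv : ∀ x ∈ Set.Icc (0:ℝ) 1, f (g x) = x
  map_zero : f 0 = 0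
  map_one : f 1 = 1
  contDiffOn : ContDiffOn ℝ 1 f (Set.Icc (0:ℝ) 1)
  inv_contDiffOn : ContDiffOn ℝ 1 g (Set.Icc (0:ℝ) 1)
  deriv_pos : ∀ x ∈ Set.Icc (0:ℝ) 1, 0 < derivWithin f (Set.Icc (0:ℝ) 1) x

/-- The growth sequence `Γ_n(f) = max (‖(fⁿ)'‖_∞, ‖(f⁻ⁿ)'‖_∞)`, where `g = f⁻¹`. -/
noncomputable def Gamma (f g : ℝ → ℝ) (n : ℕ) : ℝ :=
  max (supAbsDeriv (f^[n])) (supAbsDeriv (g^[n]))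

/-- `γ(f) = lim_n Γ_n(f)^(1/n) = 1`, where `g = f⁻¹`. -/
def GammaEqOne (f g : ℝ → ℝ) : Prop :=
  Filter.Tendsto (fun n : ℕ => (Gamma f g n) ^ (1/(n:ℝ))) Filter.atTop (nhds 1)

/-- A modulus of continuity: continuous, non-decreasing, nonnegative on `[0,1]`,
vanishing at `0`, and subadditive. -/
structure IsModCont (ω : ℝ → ℝ) : Prop where
  continuousOn : ContinuousOn ω (Set.Icc (0:ℝ) 1)
  monotoneOn : MonotoneOn ω (Set.Icc (0:ℝ) 1)
  nonneg : ∀ x ∈ Set.Icc (0:ℝ) 1, 0 ≤ ω x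
  map_zero : ω 0 = 0
  subadd : ∀ a b : ℝ, 0 ≤ a → 0 ≤ b → a + b ≤ 1 → ω (a + b) ≤ ω a + ω b

/-- Membership in `Diff₀^ω[0,1]`: the derivative of `f` has modulus of continuity
controlled by `ω` up to a multiplicative constant. -/
def InDiffOmega (ω f : ℝ → ℝ) : Prop :=
  ∃ C > 0, ∀ x ∈ Set.Icc (0:ℝ) 1, ∀ y ∈ Set.Icc (0:ℝ) 1,
    |derivWithin f (Set.Icc (0:ℝ) 1) x - derivWithin f (Set.Icc (0:ℝ) 1) y| ≤ C * ω |x - y|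


section BorichevConstruction

open Set Filter MeasureTheory intervalIntegral Real

namespace BorichevProof

variable (δ : ℕ → ℝ)

noncomputable def c (s : ℝ) : ℝ := δ ⌊s⌋₊

noncomputable def W (u : ℝ) : ℝ := ∫ s in (0:ℝ)..u, c δ s

noncomputable def ρ (t : ℝ) : ℝ := Real.exp (-(W δ |t|))

noncomputable def Z : ℝ := ∫ t, ρ δ t

noncomputable def G (t : ℝ) : ℝ := (∫ s in Set.Iic t, ρ δ s) / Z δ

variable {δ}

lemma c_anti (hδanti : Antitone δ) : Antitone (c δ) :=
  fun _ _ h => hδanti (Nat.floor_mono h)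

lemma c_pos (hδpos : ∀ n, 0 < δ n) (s : ℝ) : 0 < c δ s := hδpos _

lemma c_intInt (hδanti : Antitone δ) (a b : ℝ) : IntervalIntegrable (c δ) volume a b :=
  (c_anti hδanti).intervalIntegrable

lemma c_tendsto (hδlim : Tendsto δ atTop (nhds 0)) :
    Tendsto (c δ) atTop (nhds 0) :=
  hδlim.comp tendsto_nat_floor_atTop

lemma W_zero : W δ 0 = 0 := intervalIntegral.integral_same

lemma W_sub (hδanti : Antitone δ) {u v : ℝ} : W δ v - W δ u = ∫ s in u..v, c δ s := by
  rw [W, W, ← intervalIntegral.integral_add_adjacent_intervals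
      (c_intInt hδanti 0 u) (c_intInt hδanti u v)]
  ring

lemma W_mono (hδpos : ∀ n, 0 < δ n) (hδanti : Antitone δ) : Monotone (W δ) := by
  intro u v huv
  have h := W_sub (δ := δ) hδanti (u := u) (v := v)
  have h2 : (0:ℝ) ≤ ∫ s in u..v, c δ s :=
    intervalIntegral.integral_nonneg (μ := volume) huv (fun x _ => (c_pos hδpos x).le)
  linarith

lemma W_nonneg (hδpos : ∀ n, 0 < δ n) (hδanti : Antitone δ) {u : ℝ} (hu : 0 ≤ u) :
    0 ≤ W δ u := by
  have := W_mono hδpos hδanti hu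
  rwa [W_zero] at this

lemma W_diff_le (hδanti : Antitone δ) {u v : ℝ} (huv : u ≤ v) :
    W δ v - W δ u ≤ (v - u) * c δ u := by
  rw [W_sub hδanti]
  calc ∫ s in u..v, c δ s ≤ ∫ _s in u..v, c δ u :=
        intervalIntegral.integral_mono_on huv (c_intInt hδanti u v)
          (intervalIntegrable_const) (fun x hx => c_anti hδanti hx.1)
    _ = (v - u) * c δ u := by simp [intervalIntegral.integral_const, smul_eq_mul]

lemma W_shift_le (hδanti : Antitone δ) {b s : ℝ} (hb : 0 ≤ b) (hs : 0 ≤ s) :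
    W δ (b + s) - W δ b ≤ W δ s := by
  have h1 : W δ (b + s) - W δ b = ∫ x in b..(b + s), c δ x := W_sub hδanti
  have h2 : ∫ x in b..(b + s), c δ x = ∫ x in (0:ℝ)..s, c δ (x + b) := by
    rw [intervalIntegral.integral_comp_add_right (c δ) b]
    norm_num [add_comm]
  have h3 : ∫ x in (0:ℝ)..s, c δ (x + b) ≤ ∫ x in (0:ℝ)..s, c δ x := by
    apply intervalIntegral.integral_mono_on hs
    · have ha : Antitone (fun x => c δ (x + b)) := fun x y h => c_anti hδanti (by linarith)
      exact ha.intervalIntegrable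
    · exact c_intInt hδanti 0 s
    · intro x _; exact c_anti hδanti (by linarith)
  have : W δ s = ∫ x in (0:ℝ)..s, c δ x := by
    have := W_sub (δ := δ) hδanti (u := 0) (v := s); rw [W_zero] at this; linarith
  linarith [h1, h2 ▸ h1, h3]

lemma W_subadd (hδanti : Antitone δ) {u v : ℝ} (hu : 0 ≤ u) (hv : 0 ≤ v) :
    W δ (u + v) ≤ W δ u + W δ v := by
  have := W_shift_le hδanti hu hv
  linarith

lemma W_continuous (hδanti : Antitone δ) : Continuous (W δ) :=
  intervalIntegral.continuous_primitive (c_intInt hδanti) 0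

lemma W_nat (hδanti : Antitone δ) (n : ℕ) : W δ n = ∑ k ∈ Finset.range n, δ k := by
  induction n with
  | zero => simpa using W_zero (δ := δ)
  | succ n ih =>
    have key : W δ ((n:ℝ) + 1) - W δ n = δ n := by
      rw [W_sub hδanti]
      have h1 : ∫ s in (n:ℝ)..((n:ℝ)+1), c δ s = ∫ s in Set.Ioc (n:ℝ) ((n:ℝ)+1), c δ s := by
        rw [intervalIntegral.integral_of_le (by linarith)]
      rw [h1, MeasureTheory.integral_Ioc_eq_integral_Ioo,
        MeasureTheory.setIntegral_congr_fun measurableSet_Ioo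
          (g := fun _ => δ n) ?_]
      · simp
      · intro x hx
        have hfl : ⌊x⌋₊ = n := by
          rw [Nat.floor_eq_iff (le_trans (by positivity) hx.1.le)]
          exact ⟨hx.1.le, by push_cast; linarith [hx.2]⟩
        simp [c, hfl]
    rw [Finset.sum_range_succ, ← ih]
    push_cast
    linarith

lemma sum_inv_sqrt (m : ℕ) : Real.sqrt m ≤ ∑ k ∈ Finset.range m, 1 / Real.sqrt (k + 1) := by
  induction m with
  | zero => simp
  | succ m ih =>
    rw [Finset.sum_range_succ]
    have hpos : (0:ℝ) < Real.sqrt ((m:ℝ) + 1) := Real.sqrt_pos.2 (by positivity)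
    have h1 : Real.sqrt ((m:ℝ) + 1) ≤ Real.sqrt m + 1 / Real.sqrt ((m:ℝ) + 1) := by
      have e1 := Real.mul_self_sqrt (by positivity : (0:ℝ) ≤ (m:ℝ) + 1)
      have e2 := Real.mul_self_sqrt (Nat.cast_nonneg m : (0:ℝ) ≤ (m:ℝ))
      have e3 : Real.sqrt (m:ℝ) ≤ Real.sqrt ((m:ℝ)+1) := Real.sqrt_le_sqrt (by linarith)
      have h4 : (0:ℝ) ≤ Real.sqrt (m:ℝ) := Real.sqrt_nonneg _
      rw [← sub_le_iff_le_add', le_div_iff₀ hpos]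
      nlinarith
    push_cast
    calc Real.sqrt ((m:ℝ) + 1) ≤ Real.sqrt m + 1 / Real.sqrt ((m:ℝ) + 1) := h1
      _ ≤ (∑ k ∈ Finset.range m, 1 / Real.sqrt ((k:ℝ) + 1)) + 1 / Real.sqrt ((m:ℝ) + 1) := by
          linarith [ih]

lemma W_ge_sqrt (hδpos : ∀ n, 0 < δ n) (hδanti : Antitone δ)
    (hδroot : ∀ n : ℕ, 1 / Real.sqrt (n + 1) ≤ δ n) {u : ℝ} (hu : 0 ≤ u) :
    Real.sqrt u - 1 ≤ W δ u := by
  have h1 : W δ (⌊u⌋₊ : ℝ) ≤ W δ u := W_mono hδpos hδanti (Nat.floor_le hu)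
  have h2 : Real.sqrt ⌊u⌋₊ ≤ W δ (⌊u⌋₊ : ℝ) := by
    rw [W_nat hδanti]
    exact (sum_inv_sqrt _).trans (Finset.sum_le_sum fun k _ => by
      have := hδroot k; push_cast at this ⊢; linarith)
  have h3 : Real.sqrt u - 1 ≤ Real.sqrt ⌊u⌋₊ := by
    have hfl : u - 1 ≤ (⌊u⌋₊ : ℝ) := (Nat.sub_one_lt_floor u).le
    have h4 : Real.sqrt u ≤ Real.sqrt ((⌊u⌋₊ : ℝ) + 1) := Real.sqrt_le_sqrt (by linarith)
    have h5 : Real.sqrt ((⌊u⌋₊:ℝ) + 1) ≤ Real.sqrt ⌊u⌋₊ + 1 := by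
      nlinarith [Real.sq_sqrt (by positivity : (0:ℝ) ≤ (⌊u⌋₊:ℝ)),
        Real.sq_sqrt (by positivity : (0:ℝ) ≤ (⌊u⌋₊:ℝ) + 1),
        Real.sqrt_nonneg ((⌊u⌋₊:ℝ)), Real.sqrt_nonneg ((⌊u⌋₊:ℝ) + 1)]
    linarith
  linarith

/-! ### ρ, Z, G -/

lemma ρ_pos (t : ℝ) : 0 < ρ δ t := Real.exp_pos _

lemma ρ_zero : ρ δ 0 = 1 := by simp [ρ, W_zero]

lemma ρ_continuous (hδanti : Antitone δ) : Continuous (ρ δ) :=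
  Real.continuous_exp.comp ((W_continuous hδanti).comp continuous_abs).neg

lemma ρ_bound (hδpos : ∀ n, 0 < δ n) (hδanti : Antitone δ)
    (hδroot : ∀ n : ℕ, 1 / Real.sqrt (n + 1) ≤ δ n) (t : ℝ) :
    ρ δ t * (1 + t ^ 2) ≤ 257 * Real.exp 1 := by
  set x := Real.sqrt |t| with hxdef
  have hx : 0 ≤ x := Real.sqrt_nonneg _
  have hx2 : x ^ 2 = |t| := Real.sq_sqrt (abs_nonneg t)
  have ht2 : t ^ 2 = x ^ 4 := by
    have h := sq_abs t
    nlinarith [hx2]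
  have h1 : ρ δ t ≤ Real.exp 1 * Real.exp (-x) := by
    rw [ρ, ← Real.exp_add]
    apply Real.exp_le_exp.2
    have := W_ge_sqrt hδpos hδanti hδroot (abs_nonneg t)
    linarith
  have h2 : x ≤ 4 * Real.exp (x / 4) := by
    have := Real.add_one_le_exp (x / 4); linarith
  have h3 : x ^ 4 ≤ 256 * Real.exp x := by
    have h4 : (4 * Real.exp (x / 4)) ^ 4 = 256 * Real.exp x := by
      rw [mul_pow, ← Real.exp_nat_mul]
      norm_num
      rw [show (4:ℝ) * (x/4) = x by ring]
    calc x ^ 4 ≤ (4 * Real.exp (x / 4)) ^ 4 := by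
          apply pow_le_pow_left₀ hx h2
      _ = 256 * Real.exp x := h4
  have h5 : Real.exp (-x) * x ^ 4 ≤ 256 := by
    rw [Real.exp_neg, inv_mul_le_iff₀ (Real.exp_pos x)]
    linarith
  have h6 : Real.exp (-x) ≤ 1 := Real.exp_le_one_iff.2 (by linarith)
  have h7 : 0 < Real.exp (-x) := Real.exp_pos _
  have h8 : 0 < ρ δ t := ρ_pos t
  have h9 : 0 ≤ x ^ 4 := by positivity
  have he : 0 < Real.exp 1 := Real.exp_pos 1
  calc ρ δ t * (1 + t ^ 2) = ρ δ t * (1 + x ^ 4) := by rw [ht2]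
    _ ≤ (Real.exp 1 * Real.exp (-x)) * (1 + x ^ 4) := by
        apply mul_le_mul_of_nonneg_right h1 (by positivity)
    _ = Real.exp 1 * (Real.exp (-x) + Real.exp (-x) * x ^ 4) := by ring
    _ ≤ Real.exp 1 * (1 + 256) := by
        apply mul_le_mul_of_nonneg_left (by linarith) he.le
    _ = 257 * Real.exp 1 := by ring

lemma ρ_integrable (hδpos : ∀ n, 0 < δ n) (hδanti : Antitone δ)
    (hδroot : ∀ n : ℕ, 1 / Real.sqrt (n + 1) ≤ δ n) :
    Integrable (ρ δ) := by
  have hg : Integrable (fun t : ℝ => (257 * Real.exp 1) * (1 + t ^ 2)⁻¹) volume :=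
    integrable_inv_one_add_sq.const_mul _
  apply hg.mono' (ρ_continuous hδanti).aestronglyMeasurable
  filter_upwards with t
  rw [Real.norm_eq_abs, abs_of_pos (ρ_pos t), mul_comm (257 * Real.exp 1),
    ← div_eq_inv_mul, le_div_iff₀ (by positivity)]
  exact ρ_bound hδpos hδanti hδroot t

section G

variable (hδpos : ∀ n, 0 < δ n) (hδanti : Antitone δ)
    (hδroot : ∀ n : ℕ, 1 / Real.sqrt (n + 1) ≤ δ n)

include hδpos hδanti hδroot

lemma intervalInt_ρ_pos {a b : ℝ} (hab : a < b) : 0 < ∫ t in a..b, ρ δ t :=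
  intervalIntegral.intervalIntegral_pos_of_pos_on
    ((ρ_integrable hδpos hδanti hδroot).intervalIntegrable)
    (fun x _ => ρ_pos x) hab

lemma Iic_ρ_pos (t : ℝ) : 0 < ∫ s in Set.Iic t, ρ δ s := by
  have h1 : (0:ℝ) < ∫ s in (t-1)..t, ρ δ s :=
    intervalInt_ρ_pos hδpos hδanti hδroot (by linarith)
  have h2 : ∫ s in (t-1)..t, ρ δ s ≤ ∫ s in Set.Iic t, ρ δ s := by
    rw [intervalIntegral.integral_of_le (by linarith : t - 1 ≤ t)]
    apply MeasureTheory.setIntegral_mono_set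
      ((ρ_integrable hδpos hδanti hδroot).integrableOn)
      (Filter.Eventually.of_forall fun x => (ρ_pos x).le)
    exact HasSubset.Subset.eventuallyLE (fun x hx => hx.2)
  linarith

lemma Ioi_ρ_pos (t : ℝ) : 0 < ∫ s in Set.Ioi t, ρ δ s := by
  have h1 : (0:ℝ) < ∫ s in t..(t+1), ρ δ s :=
    intervalInt_ρ_pos hδpos hδanti hδroot (by linarith)
  have h2 : ∫ s in t..(t+1), ρ δ s ≤ ∫ s in Set.Ioi t, ρ δ s := by
    rw [intervalIntegral.integral_of_le (by linarith : t ≤ t + 1)]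
    apply MeasureTheory.setIntegral_mono_set
      ((ρ_integrable hδpos hδanti hδroot).integrableOn)
      (Filter.Eventually.of_forall fun x => (ρ_pos x).le)
    exact HasSubset.Subset.eventuallyLE (fun x hx => hx.1)
  linarith

lemma Z_pos : 0 < Z δ := by
  rw [Z, ← intervalIntegral.integral_Iic_add_Ioi
    ((ρ_integrable hδpos hδanti hδroot).integrableOn)
    ((ρ_integrable hδpos hδanti hδroot).integrableOn)]
  have := Iic_ρ_pos hδpos hδanti hδroot (0:ℝ)
  have := Ioi_ρ_pos hδpos hδanti hδroot (0:ℝ)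
  linarith

lemma G_mem (t : ℝ) : G δ t ∈ Set.Ioo (0:ℝ) 1 := by
  have hZ := Z_pos hδpos hδanti hδroot
  constructor
  · exact div_pos (Iic_ρ_pos hδpos hδanti hδroot t) hZ
  · rw [G, div_lt_one hZ, Z, ← intervalIntegral.integral_Iic_add_Ioi
      ((ρ_integrable hδpos hδanti hδroot).integrableOn)
      ((ρ_integrable hδpos hδanti hδroot).integrableOn)]
    linarith [Ioi_ρ_pos hδpos hδanti hδroot t]

lemma G_strictMono : StrictMono (G δ) := by
  intro a b hab
  have hZ := Z_pos hδpos hδanti hδroot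
  have h := intervalIntegral.integral_Iic_sub_Iic
    ((ρ_integrable hδpos hδanti hδroot).integrableOn)
    ((ρ_integrable hδpos hδanti hδroot).integrableOn) (a := a) (b := b)
  have hd : G δ b - G δ a = (∫ s in a..b, ρ δ s) / Z δ := by
    rw [G, G, div_sub_div_same, h]
  have hpos : 0 < (∫ s in a..b, ρ δ s) / Z δ :=
    div_pos (intervalInt_ρ_pos hδpos hδanti hδroot hab) hZ
  linarith

lemma G_eq (t : ℝ) :
    G δ t = ((∫ s in (0:ℝ)..t, ρ δ s) + ∫ s in Set.Iic 0, ρ δ s) / Z δ := by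
  rw [G]
  congr 1
  have h := intervalIntegral.integral_Iic_sub_Iic
    ((ρ_integrable hδpos hδanti hδroot).integrableOn)
    ((ρ_integrable hδpos hδanti hδroot).integrableOn) (a := (0:ℝ)) (b := t)
  linarith

lemma G_hasDeriv (t : ℝ) : HasDerivAt (G δ) (ρ δ t / Z δ) t := by
  have h1 : HasDerivAt (fun u => ∫ s in (0:ℝ)..u, ρ δ s) (ρ δ t) t :=
    intervalIntegral.integral_hasDerivAt_right
      ((ρ_integrable hδpos hδanti hδroot).intervalIntegrable)
      ((ρ_continuous hδanti).stronglyMeasurableAtFilter _ _)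
      (ρ_continuous hδanti).continuousAt
  have h2 := (h1.add_const (∫ s in Set.Iic 0, ρ δ s)).div_const (Z δ)
  apply h2.congr_of_eventuallyEq
  filter_upwards with u
  exact G_eq hδpos hδanti hδroot u

lemma G_continuous : Continuous (G δ) := by
  apply continuous_iff_continuousAt.2
  exact fun t => (G_hasDeriv hδpos hδanti hδroot t).continuousAt

lemma G_tendsto_bot : Tendsto (G δ) atBot (nhds 0) := by
  have h : Tendsto (fun t : ℝ => ∫ s in t..(0:ℝ), ρ δ s) atBot
      (nhds (∫ s in Set.Iic (0:ℝ), ρ δ s)) :=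
    MeasureTheory.intervalIntegral_tendsto_integral_Iic (μ := volume) 0
      ((ρ_integrable hδpos hδanti hδroot).integrableOn) tendsto_id
  have h2 := (h.neg.add_const (∫ s in Set.Iic (0:ℝ), ρ δ s)).div_const (Z δ)
  have h3 : ∀ t : ℝ, ((-∫ s in t..(0:ℝ), ρ δ s) + ∫ s in Set.Iic 0, ρ δ s) / Z δ = G δ t := by
    intro t
    rw [G_eq hδpos hδanti hδroot t, intervalIntegral.integral_symm 0 t, neg_neg]
  simpa using h2.congr h3

lemma G_tendsto_top : Tendsto (G δ) atTop (nhds 1) := by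
  have h := MeasureTheory.intervalIntegral_tendsto_integral_Ioi (μ := volume) 0
    ((ρ_integrable hδpos hδanti hδroot).integrableOn) (tendsto_id (α := ℝ))
  have h2 : Tendsto (G δ) atTop
      (nhds (((∫ s in Set.Ioi (0:ℝ), ρ δ s) + ∫ s in Set.Iic 0, ρ δ s) / Z δ)) :=
    ((h.add_const _).div_const _).congr
      (fun t => (G_eq hδpos hδanti hδroot t).symm)
  have h3 : ((∫ s in Set.Ioi (0:ℝ), ρ δ s) + ∫ s in Set.Iic 0, ρ δ s) / Z δ = 1 := by
    rw [add_comm, intervalIntegral.integral_Iic_add_Ioi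
      ((ρ_integrable hδpos hδanti hδroot).integrableOn)
      ((ρ_integrable hδpos hδanti hδroot).integrableOn)]
    exact div_self (Z_pos hδpos hδanti hδroot).ne'
  rwa [h3] at h2

lemma G_surj {x : ℝ} (hx : x ∈ Set.Ioo (0:ℝ) 1) : ∃ t, G δ t = x := by
  obtain ⟨a, ha⟩ : ∃ a, G δ a < x := by
    have := (G_tendsto_bot hδpos hδanti hδroot).eventually_lt_const hx.1
    exact this.exists
  obtain ⟨b, hb⟩ : ∃ b, x < G δ b := by
    have := (G_tendsto_top hδpos hδanti hδroot).eventually_const_lt hx.2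
    exact this.exists
  have hab : a ≤ b := by
    by_contra hc
    push_neg at hc
    have := G_strictMono hδpos hδanti hδroot hc
    linarith
  have := intermediate_value_Ioo hab
    (G_continuous hδpos hδanti hδroot).continuousOn (f := G δ)
  obtain ⟨t, _, ht⟩ := this ⟨ha, hb⟩
  exact ⟨t, ht⟩

end G

/-! ### invG, F, D -/

noncomputable def invG (δ : ℕ → ℝ) (x : ℝ) : ℝ := Function.invFun (G δ) x

noncomputable def F (δ : ℕ → ℝ) (a : ℝ) (x : ℝ) : ℝ :=
  if x ∈ Set.Ioo (0:ℝ) 1 then G δ (invG δ x + a) else x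

noncomputable def D (δ : ℕ → ℝ) (a : ℝ) (x : ℝ) : ℝ :=
  if x ∈ Set.Ioo (0:ℝ) 1 then ρ δ (invG δ x + a) / ρ δ (invG δ x) else 1

section Finv

variable (hδpos : ∀ n, 0 < δ n) (hδanti : Antitone δ)
    (hδroot : ∀ n : ℕ, 1 / Real.sqrt (n + 1) ≤ δ n)

include hδpos hδanti hδroot

lemma invG_G (t : ℝ) : invG δ (G δ t) = t :=
  Function.leftInverse_invFun (G_strictMono hδpos hδanti hδroot).injective t

lemma G_invG {x : ℝ} (hx : x ∈ Set.Ioo (0:ℝ) 1) : G δ (invG δ x) = x :=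
  Function.invFun_eq (G_surj hδpos hδanti hδroot hx)

lemma invG_continuousAt (t : ℝ) : ContinuousAt (invG δ) (G δ t) := by
  rw [ContinuousAt, invG_G hδpos hδanti hδroot]
  rw [(nhds_basis_Ioo_pos t).tendsto_right_iff]
  intro ε hε
  have hmem : Set.Ioo (G δ (t - ε)) (G δ (t + ε)) ∈ nhds (G δ t) :=
    Ioo_mem_nhds (G_strictMono hδpos hδanti hδroot (by linarith))
      (G_strictMono hδpos hδanti hδroot (by linarith))
  filter_upwards [hmem] with x hx
  have hx01 : x ∈ Set.Ioo (0:ℝ) 1 :=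
    ⟨(G_mem hδpos hδanti hδroot (t - ε)).1.trans hx.1,
     hx.2.trans (G_mem hδpos hδanti hδroot (t + ε)).2⟩
  obtain ⟨s, rfl⟩ := G_surj hδpos hδanti hδroot hx01
  rw [invG_G hδpos hδanti hδroot]
  exact ⟨(G_strictMono hδpos hδanti hδroot).lt_iff_lt.1 hx.1,
    (G_strictMono hδpos hδanti hδroot).lt_iff_lt.1 hx.2⟩

lemma invG_tendsto_bot : Tendsto (invG δ) (nhdsWithin 0 (Set.Ioi (0:ℝ))) atBot := by
  rw [tendsto_atBot]
  intro M
  have hmem : Set.Ioo (0:ℝ) (G δ M) ∈ nhdsWithin 0 (Set.Ioi (0:ℝ)) :=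
    Ioo_mem_nhdsGT_of_mem ⟨le_refl 0, (G_mem hδpos hδanti hδroot M).1⟩
  filter_upwards [hmem] with x hx
  have hx01 : x ∈ Set.Ioo (0:ℝ) 1 :=
    ⟨hx.1, hx.2.trans (G_mem hδpos hδanti hδroot M).2⟩
  obtain ⟨s, rfl⟩ := G_surj hδpos hδanti hδroot hx01
  rw [invG_G hδpos hδanti hδroot]
  exact ((G_strictMono hδpos hδanti hδroot).lt_iff_lt.1 hx.2).le

lemma invG_tendsto_top : Tendsto (invG δ) (nhdsWithin 1 (Set.Iio (1:ℝ))) atTop := by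
  rw [tendsto_atTop]
  intro M
  have hmem : Set.Ioo (G δ M) (1:ℝ) ∈ nhdsWithin 1 (Set.Iio (1:ℝ)) :=
    Ioo_mem_nhdsLT_of_mem ⟨(G_mem hδpos hδanti hδroot M).2, le_refl 1⟩
  filter_upwards [hmem] with x hx
  have hx01 : x ∈ Set.Ioo (0:ℝ) 1 :=
    ⟨(G_mem hδpos hδanti hδroot M).1.trans hx.1, hx.2⟩
  obtain ⟨s, rfl⟩ := G_surj hδpos hδanti hδroot hx01
  rw [invG_G hδpos hδanti hδroot]
  exact ((G_strictMono hδpos hδanti hδroot).lt_iff_lt.1 hx.1).le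

lemma F_apply_G (a t : ℝ) : F δ a (G δ t) = G δ (t + a) := by
  rw [F, if_pos (G_mem hδpos hδanti hδroot t), invG_G hδpos hδanti hδroot]

lemma F_comp (a b : ℝ) (x : ℝ) : F δ a (F δ b x) = F δ (b + a) x := by
  by_cases hx : x ∈ Set.Ioo (0:ℝ) 1
  · have h1 : F δ b x = G δ (invG δ x + b) := by rw [F, if_pos hx]
    rw [h1, F_apply_G hδpos hδanti hδroot, F, if_pos hx, add_assoc]
  · have h1 : F δ b x = x := by rw [F, if_neg hx]
    rw [h1, F, if_neg hx, F, if_neg hx]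

lemma F_id (x : ℝ) : F δ 0 x = x := by
  by_cases hx : x ∈ Set.Ioo (0:ℝ) 1
  · rw [F, if_pos hx, add_zero, G_invG hδpos hδanti hδroot hx]
  · rw [F, if_neg hx]

lemma F_iterate (a : ℝ) (n : ℕ) : (F δ a)^[n] = F δ (n * a) := by
  induction n with
  | zero => funext x; simpa using (F_id hδpos hδanti hδroot x).symm
  | succ n ih =>
    funext x
    rw [Function.iterate_succ', Function.comp_apply, ih,
      F_comp hδpos hδanti hδroot]
    push_cast
    ring_nf

end Finv

/-! ### ρ ratio estimates -/

lemma ρ_ratio_eq (t a : ℝ) :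
    ρ δ (t + a) / ρ δ t = Real.exp (W δ |t| - W δ |t + a|) := by
  rw [ρ, ρ, ← Real.exp_sub]
  ring_nf

lemma ρ_ratio_le (hδpos : ∀ n, 0 < δ n) (hδanti : Antitone δ) (t a : ℝ) :
    ρ δ (t + a) / ρ δ t ≤ Real.exp (W δ |a|) := by
  rw [ρ_ratio_eq]
  apply Real.exp_le_exp.2
  have h1 : |t| ≤ |t + a| + |a| := by
    calc |t| = |(t + a) + (-a)| := by ring_nf
      _ ≤ |t + a| + |-a| := abs_add_le _ _
      _ = |t + a| + |a| := by rw [abs_neg]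
  have h2 : W δ |t| ≤ W δ (|t + a| + |a|) := W_mono hδpos hδanti h1
  have h3 : W δ (|t + a| + |a|) ≤ W δ |t + a| + W δ |a| :=
    W_subadd hδanti (abs_nonneg _) (abs_nonneg _)
  linarith

lemma W_absdiff_le (hδpos : ∀ n, 0 < δ n) (hδanti : Antitone δ) (t a : ℝ) :
    abs (W δ (abs (t + a)) - W δ (abs t)) ≤ |a| * c δ (|t| - |a|) := by
  have habs : abs ((abs (t + a)) - abs t) ≤ |a| := by
    have := abs_abs_sub_abs_le_abs_sub (t + a) t
    simpa using this
  rcases le_total (|t + a|) (|t|) with h | h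
  · rw [abs_of_nonpos (by linarith [W_mono hδpos hδanti h] : W δ |t + a| - W δ |t| ≤ 0)]
    have hd := W_diff_le hδanti h
    have hle : |t| - |t + a| ≤ |a| := by
      rw [abs_le] at habs; linarith [habs.1]
    have hantic : c δ |t + a| ≤ c δ (|t| - |a|) := by
      apply c_anti hδanti
      rw [abs_le] at habs; linarith [habs.1]
    calc -(W δ |t + a| - W δ |t|) = W δ |t| - W δ |t + a| := by ring
      _ ≤ (|t| - |t + a|) * c δ |t + a| := hd
      _ ≤ |a| * c δ (|t| - |a|) := by
          apply mul_le_mul hle hantic (c_pos hδpos _).le (abs_nonneg a)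
  · rw [abs_of_nonneg (by linarith [W_mono hδpos hδanti h] : 0 ≤ W δ |t + a| - W δ |t|)]
    have hd := W_diff_le hδanti h
    have hle : |t + a| - |t| ≤ |a| := by
      rw [abs_le] at habs; linarith [habs.2]
    have hantic : c δ |t| ≤ c δ (|t| - |a|) := by
      apply c_anti hδanti
      linarith [abs_nonneg a]
    calc W δ |t + a| - W δ |t| ≤ (|t + a| - |t|) * c δ |t| := hd
      _ ≤ |a| * c δ (|t| - |a|) := by
          apply mul_le_mul hle hantic (c_pos hδpos _).le (abs_nonneg a)

lemma ρ_ratio_tendsto (hδpos : ∀ n, 0 < δ n) (hδanti : Antitone δ)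
    (hδlim : Tendsto δ atTop (nhds 0)) (a : ℝ) {l : Filter ℝ}
    (hl : Tendsto (fun t : ℝ => |t|) l atTop) :
    Tendsto (fun t => ρ δ (t + a) / ρ δ t) l (nhds 1) := by
  have hW : Tendsto (fun t => W δ |t| - W δ |t + a|) l (nhds 0) := by
    have h1 : Tendsto (fun t : ℝ => |t| - |a|) l atTop :=
      tendsto_atTop_add_const_right _ (-|a|) hl
    have h2 : Tendsto (fun t : ℝ => c δ (|t| - |a|)) l (nhds 0) :=
      (c_tendsto hδlim).comp h1
    have hg : Tendsto (fun t : ℝ => |a| * c δ (|t| - |a|)) l (nhds 0) := by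
      simpa using h2.const_mul |a|
    apply squeeze_zero_norm _ hg
    intro t
    rw [Real.norm_eq_abs, abs_sub_comm]
    exact W_absdiff_le hδpos hδanti t a
  have := (Real.continuous_exp.tendsto 0).comp hW
  rw [Real.exp_zero] at this
  apply this.congr
  intro t
  rw [Function.comp_apply, ← ρ_ratio_eq]


end BorichevProof

namespace BorichevProof

variable {δ : ℕ → ℝ}

/-! ### Calculus of F -/

section Calc

variable (hδpos : ∀ n, 0 < δ n) (hδanti : Antitone δ)
    (hδroot : ∀ n : ℕ, 1 / Real.sqrt (n + 1) ≤ δ n)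

include hδpos hδanti hδroot

lemma F_hasDerivAt (a : ℝ) {x : ℝ} (hx : x ∈ Set.Ioo (0:ℝ) 1) :
    HasDerivAt (F δ a) (D δ a x) x := by
  obtain ⟨t, rfl⟩ := G_surj hδpos hδanti hδroot hx
  have hZ := Z_pos hδpos hδanti hδroot
  have hinv : HasDerivAt (invG δ) ((ρ δ t / Z δ)⁻¹) (G δ t) := by
    apply HasDerivAt.of_local_left_inverse (invG_continuousAt hδpos hδanti hδroot t)
    · rw [invG_G hδpos hδanti hδroot]
      exact G_hasDeriv hδpos hδanti hδroot t
    · exact (div_pos (ρ_pos t) hZ).ne'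
    · filter_upwards [isOpen_Ioo.mem_nhds hx] with y hy
      exact G_invG hδpos hδanti hδroot hy
  have houter : HasDerivAt (fun s => G δ (s + a)) (ρ δ (t + a) / Z δ)
      (invG δ (G δ t)) := by
    rw [invG_G hδpos hδanti hδroot]
    have h1 : HasDerivAt (fun s : ℝ => s + a) 1 t := (hasDerivAt_id t).add_const a
    have h2 := (G_hasDeriv hδpos hδanti hδroot (t + a)).comp t h1
    rw [mul_one] at h2
    exact h2
  have hcomp := houter.comp (G δ t) hinv
  have hval : ρ δ (t + a) / Z δ * (ρ δ t / Z δ)⁻¹ = ρ δ (t + a) / ρ δ t := by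
    field_simp
  rw [hval] at hcomp
  have hD : D δ a (G δ t) = ρ δ (t + a) / ρ δ t := by
    rw [D, if_pos hx, invG_G hδpos hδanti hδroot]
  rw [hD]
  apply hcomp.congr_of_eventuallyEq
  filter_upwards [isOpen_Ioo.mem_nhds hx] with y hy
  rw [F, if_pos hy, Function.comp_apply]

lemma D_tendsto_nhds_zero (hδlim : Tendsto δ atTop (nhds 0)) (a : ℝ) :
    Tendsto (D δ a) (nhdsWithin 0 (Set.Ioi (0:ℝ))) (nhds 1) := by
  have hmem : Set.Ioo (0:ℝ) 1 ∈ nhdsWithin 0 (Set.Ioi (0:ℝ)) :=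
    Ioo_mem_nhdsGT_of_mem ⟨le_refl 0, one_pos⟩
  have habs : Tendsto (fun t : ℝ => |t|) atBot atTop :=
    tendsto_abs_atBot_atTop
  have hr := (ρ_ratio_tendsto hδpos hδanti hδlim a habs).comp
    (invG_tendsto_bot hδpos hδanti hδroot)
  apply hr.congr'
  filter_upwards [hmem] with x hx
  rw [Function.comp_apply, D, if_pos hx]

lemma D_tendsto_nhds_one (hδlim : Tendsto δ atTop (nhds 0)) (a : ℝ) :
    Tendsto (D δ a) (nhdsWithin 1 (Set.Iio (1:ℝ))) (nhds 1) := by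
  have hmem : Set.Ioo (0:ℝ) 1 ∈ nhdsWithin 1 (Set.Iio (1:ℝ)) :=
    Ioo_mem_nhdsLT_of_mem ⟨one_pos, le_refl 1⟩
  have habs : Tendsto (fun t : ℝ => |t|) atTop atTop :=
    tendsto_abs_atTop_atTop
  have hr := (ρ_ratio_tendsto hδpos hδanti hδlim a habs).comp
    (invG_tendsto_top hδpos hδanti hδroot)
  apply hr.congr'
  filter_upwards [hmem] with x hx
  rw [Function.comp_apply, D, if_pos hx]

lemma F_zero_val (a : ℝ) : F δ a 0 = 0 := by
  rw [F, if_neg (by simp : ¬ (0:ℝ) ∈ Set.Ioo (0:ℝ) 1)]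

lemma F_one_val (a : ℝ) : F δ a 1 = 1 := by
  rw [F, if_neg (by simp : ¬ (1:ℝ) ∈ Set.Ioo (0:ℝ) 1)]

lemma D_zero_val (a : ℝ) : D δ a 0 = 1 := by
  rw [D, if_neg (by simp : ¬ (0:ℝ) ∈ Set.Ioo (0:ℝ) 1)]

lemma D_one_val (a : ℝ) : D δ a 1 = 1 := by
  rw [D, if_neg (by simp : ¬ (1:ℝ) ∈ Set.Ioo (0:ℝ) 1)]

lemma F_diffOn_Ioo (a : ℝ) : DifferentiableOn ℝ (F δ a) (Set.Ioo (0:ℝ) 1) :=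
  fun x hx => (F_hasDerivAt hδpos hδanti hδroot a hx).differentiableAt.differentiableWithinAt

lemma F_cont_at_zero (hδlim : Tendsto δ atTop (nhds 0)) (a : ℝ) :
    ContinuousWithinAt (F δ a) (Set.Ioo (0:ℝ) 1) 0 := by
  rw [ContinuousWithinAt, F_zero_val hδpos hδanti hδroot]
  have hinv : Tendsto (invG δ) (nhdsWithin 0 (Set.Ioo (0:ℝ) 1)) atBot :=
    (invG_tendsto_bot hδpos hδanti hδroot).mono_left
      (nhdsWithin_mono 0 Set.Ioo_subset_Ioi_self)
  have hshift : Tendsto (fun t : ℝ => t + a) atBot atBot :=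
    tendsto_atBot_add_const_right _ a tendsto_id
  have h := (G_tendsto_bot hδpos hδanti hδroot).comp (hshift.comp hinv)
  apply h.congr'
  filter_upwards [self_mem_nhdsWithin] with x hx
  rw [Function.comp_apply, Function.comp_apply, F, if_pos hx]

lemma F_cont_at_one (hδlim : Tendsto δ atTop (nhds 0)) (a : ℝ) :
    ContinuousWithinAt (F δ a) (Set.Ioo (0:ℝ) 1) 1 := by
  rw [ContinuousWithinAt, F_one_val hδpos hδanti hδroot]
  have hinv : Tendsto (invG δ) (nhdsWithin 1 (Set.Ioo (0:ℝ) 1)) atTop :=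
    (invG_tendsto_top hδpos hδanti hδroot).mono_left
      (nhdsWithin_mono 1 Set.Ioo_subset_Iio_self)
  have hshift : Tendsto (fun t : ℝ => t + a) atTop atTop :=
    tendsto_atTop_add_const_right _ a tendsto_id
  have h := (G_tendsto_top hδpos hδanti hδroot).comp (hshift.comp hinv)
  apply h.congr'
  filter_upwards [self_mem_nhdsWithin] with x hx
  rw [Function.comp_apply, Function.comp_apply, F, if_pos hx]

lemma F_hasDerivWithinAt_zero (hδlim : Tendsto δ atTop (nhds 0)) (a : ℝ) :
    HasDerivWithinAt (F δ a) 1 (Set.Ici (0:ℝ)) 0 := by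
  apply hasDerivWithinAt_Ici_of_tendsto_deriv
    (F_diffOn_Ioo hδpos hδanti hδroot a)
    (F_cont_at_zero hδpos hδanti hδroot hδlim a)
    (Ioo_mem_nhdsGT_of_mem ⟨le_refl 0, one_pos⟩)
  apply (D_tendsto_nhds_zero hδpos hδanti hδroot hδlim a).congr'
  filter_upwards [Ioo_mem_nhdsGT_of_mem (Set.left_mem_Ico.2 one_pos)] with x hx
  exact ((F_hasDerivAt hδpos hδanti hδroot a hx).deriv).symm

lemma F_hasDerivWithinAt_one (hδlim : Tendsto δ atTop (nhds 0)) (a : ℝ) :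
    HasDerivWithinAt (F δ a) 1 (Set.Iic (1:ℝ)) 1 := by
  apply hasDerivWithinAt_Iic_of_tendsto_deriv
    (F_diffOn_Ioo hδpos hδanti hδroot a)
    (F_cont_at_one hδpos hδanti hδroot hδlim a)
    (Ioo_mem_nhdsLT_of_mem ⟨one_pos, le_refl 1⟩)
  apply (D_tendsto_nhds_one hδpos hδanti hδroot hδlim a).congr'
  filter_upwards [Ioo_mem_nhdsLT_of_mem (Set.right_mem_Ioc.2 one_pos)] with x hx
  exact ((F_hasDerivAt hδpos hδanti hδroot a hx).deriv).symm

omit hδpos hδanti hδroot in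
lemma mem_Ioo_of_Icc {x : ℝ} (hx : x ∈ Set.Icc (0:ℝ) 1) (h0 : x ≠ 0) (h1 : x ≠ 1) :
    x ∈ Set.Ioo (0:ℝ) 1 :=
  ⟨lt_of_le_of_ne hx.1 (Ne.symm h0), lt_of_le_of_ne hx.2 h1⟩

lemma F_hasDerivWithinAt (hδlim : Tendsto δ atTop (nhds 0)) (a : ℝ)
    {x : ℝ} (hx : x ∈ Set.Icc (0:ℝ) 1) :
    HasDerivWithinAt (F δ a) (D δ a x) (Set.Icc (0:ℝ) 1) x := by
  by_cases h0 : x = 0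
  · subst h0
    rw [D_zero_val hδpos hδanti hδroot]
    exact (F_hasDerivWithinAt_zero hδpos hδanti hδroot hδlim a).mono Set.Icc_subset_Ici_self
  by_cases h1 : x = 1
  · subst h1
    rw [D_one_val hδpos hδanti hδroot]
    exact (F_hasDerivWithinAt_one hδpos hδanti hδroot hδlim a).mono Set.Icc_subset_Iic_self
  exact (F_hasDerivAt hδpos hδanti hδroot a
    (mem_Ioo_of_Icc hx h0 h1)).hasDerivWithinAt

lemma F_derivWithin (hδlim : Tendsto δ atTop (nhds 0)) (a : ℝ)
    {x : ℝ} (hx : x ∈ Set.Icc (0:ℝ) 1) :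
    derivWithin (F δ a) (Set.Icc (0:ℝ) 1) x = D δ a x :=
  (F_hasDerivWithinAt hδpos hδanti hδroot hδlim a hx).derivWithin
    (uniqueDiffOn_Icc zero_lt_one x hx)

lemma D_continuousOn (hδlim : Tendsto δ atTop (nhds 0)) (a : ℝ) :
    ContinuousOn (D δ a) (Set.Icc (0:ℝ) 1) := by
  intro x hx
  by_cases h0 : x = 0
  · subst h0
    apply continuousWithinAt_diff_self.1
    rw [ContinuousWithinAt, D_zero_val hδpos hδanti hδroot]
    apply (D_tendsto_nhds_zero hδpos hδanti hδroot hδlim a).mono_left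
    apply nhdsWithin_mono
    intro y hy
    exact lt_of_le_of_ne hy.1.1 (Ne.symm hy.2)
  by_cases h1 : x = 1
  · subst h1
    apply continuousWithinAt_diff_self.1
    rw [ContinuousWithinAt, D_one_val hδpos hδanti hδroot]
    apply (D_tendsto_nhds_one hδpos hδanti hδroot hδlim a).mono_left
    apply nhdsWithin_mono
    intro y hy
    exact lt_of_le_of_ne hy.1.2 hy.2
  have hxIoo : x ∈ Set.Ioo (0:ℝ) 1 := mem_Ioo_of_Icc hx h0 h1
  apply ContinuousAt.continuousWithinAt
  obtain ⟨t, rfl⟩ := G_surj hδpos hδanti hδroot hxIoo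
  have hi : ContinuousAt (invG δ) (G δ t) := invG_continuousAt hδpos hδanti hδroot t
  have hc : ContinuousAt (fun y => ρ δ (invG δ y + a) / ρ δ (invG δ y)) (G δ t) := by
    apply ContinuousAt.div
    · exact (ρ_continuous hδanti).continuousAt.comp (hi.add continuousAt_const)
    · exact (ρ_continuous hδanti).continuousAt.comp hi
    · exact (ρ_pos _).ne'
  apply hc.congr
  filter_upwards [isOpen_Ioo.mem_nhds hxIoo] with y hy
  rw [D, if_pos hy]

lemma F_contDiffOn (hδlim : Tendsto δ atTop (nhds 0)) (a : ℝ) :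
    ContDiffOn ℝ 1 (F δ a) (Set.Icc (0:ℝ) 1) := by
  have h1 : (1 : WithTop ℕ∞) = 0 + 1 := by norm_num
  rw [h1, contDiffOn_succ_iff_derivWithin (uniqueDiffOn_Icc zero_lt_one)]
  refine ⟨fun x hx =>
    (F_hasDerivWithinAt hδpos hδanti hδroot hδlim a hx).differentiableWithinAt,
    by simp, ?_⟩
  rw [contDiffOn_zero]
  exact (D_continuousOn hδpos hδanti hδroot hδlim a).congr
    (fun x hx => F_derivWithin hδpos hδanti hδroot hδlim a hx)

omit hδpos hδanti hδroot in
lemma D_pos (a : ℝ) (x : ℝ) : 0 < D δ a x := by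
  rw [D]
  split
  · exact div_pos (ρ_pos _) (ρ_pos _)
  · exact one_pos

end Calc

end BorichevProof

namespace BorichevProof

variable {δ : ℕ → ℝ}

section Fin

variable (hδpos : ∀ n, 0 < δ n) (hδanti : Antitone δ)
    (hδroot : ∀ n : ℕ, 1 / Real.sqrt (n + 1) ≤ δ n)
    (hδlim : Tendsto δ atTop (nhds 0))

include hδpos hδanti hδroot

lemma D_le (a : ℝ) {x : ℝ} (hx : x ∈ Set.Icc (0:ℝ) 1) :
    D δ a x ≤ Real.exp (W δ |a|) := by
  by_cases h : x ∈ Set.Ioo (0:ℝ) 1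
  · rw [D, if_pos h]
    exact ρ_ratio_le hδpos hδanti (invG δ x) a
  · rw [D, if_neg h]
    exact Real.one_le_exp (W_nonneg hδpos hδanti (abs_nonneg a))

lemma D_max (a : ℝ) : D δ a (G δ (-a)) = Real.exp (W δ |a|) := by
  rw [D, if_pos (G_mem hδpos hδanti hδroot (-a)), invG_G hδpos hδanti hδroot]
  rw [show -a + a = (0:ℝ) by ring, ρ_zero, ρ]
  rw [abs_neg, Real.exp_neg, one_div, inv_inv]

include hδlim in
lemma supAbsDeriv_F (a : ℝ) : supAbsDeriv (F δ a) = Real.exp (W δ |a|) := by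
  have hkey : ∀ x ∈ Set.Icc (0:ℝ) 1,
      |derivWithin (F δ a) (Set.Icc (0:ℝ) 1) x| = D δ a x := by
    intro x hx
    rw [F_derivWithin hδpos hδanti hδroot hδlim a hx,
      abs_of_pos (D_pos a x)]
  apply le_antisymm
  · apply Real.sSup_le
    · rintro y ⟨x, hx, rfl⟩
      calc (fun x => |derivWithin (F δ a) (Set.Icc (0:ℝ) 1) x|) x
          = D δ a x := hkey x hx
        _ ≤ Real.exp (W δ |a|) := D_le hδpos hδanti hδroot a hx
    · exact Real.exp_nonneg _
  · have hmem : G δ (-a) ∈ Set.Icc (0:ℝ) 1 :=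
      ⟨(G_mem hδpos hδanti hδroot (-a)).1.le, (G_mem hδpos hδanti hδroot (-a)).2.le⟩
    have hbdd : BddAbove ((fun x => |derivWithin (F δ a) (Set.Icc (0:ℝ) 1) x|) ''
        Set.Icc (0:ℝ) 1) := by
      refine ⟨Real.exp (W δ |a|), ?_⟩
      rintro y ⟨x, hx, rfl⟩
      calc (fun x => |derivWithin (F δ a) (Set.Icc (0:ℝ) 1) x|) x
          = D δ a x := hkey x hx
        _ ≤ Real.exp (W δ |a|) := D_le hδpos hδanti hδroot a hx
    have := le_csSup hbdd (Set.mem_image_of_mem _ hmem)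
    rwa [hkey _ hmem, D_max hδpos hδanti hδroot a] at this

include hδlim in
lemma Gamma_F (n : ℕ) :
    _root_.Gamma (F δ 1) (F δ (-1)) n = Real.exp (W δ n) := by
  have h1 : (F δ 1)^[n] = F δ n := by
    rw [F_iterate hδpos hδanti hδroot]; norm_num
  have h2 : (F δ (-1))^[n] = F δ (-(n:ℝ)) := by
    rw [F_iterate hδpos hδanti hδroot]; norm_num
  rw [_root_.Gamma, h1, h2, supAbsDeriv_F hδpos hδanti hδroot hδlim,
    supAbsDeriv_F hδpos hδanti hδroot hδlim, abs_neg,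
    abs_of_nonneg (Nat.cast_nonneg n), max_self]

include hδlim in
lemma isDiff01_F : IsDiff01 (F δ 1) (F δ (-1)) := by
  have hmaps : ∀ a : ℝ, Set.MapsTo (F δ a) (Set.Icc (0:ℝ) 1) (Set.Icc (0:ℝ) 1) := by
    intro a x hx
    by_cases h : x ∈ Set.Ioo (0:ℝ) 1
    · rw [F, if_pos h]
      exact ⟨(G_mem hδpos hδanti hδroot _).1.le, (G_mem hδpos hδanti hδroot _).2.le⟩
    · rw [F, if_neg h]; exact hx
  refine ⟨hmaps 1, hmaps (-1), ?_, ?_, F_zero_val hδpos hδanti hδroot 1,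
    F_one_val hδpos hδanti hδroot 1,
    F_contDiffOn hδpos hδanti hδroot hδlim 1,
    F_contDiffOn hδpos hδanti hδroot hδlim (-1), ?_⟩
  · intro x _
    rw [F_comp hδpos hδanti hδroot]
    norm_num [F_id hδpos hδanti hδroot]
  · intro x _
    rw [F_comp hδpos hδanti hδroot]
    norm_num [F_id hδpos hδanti hδroot]
  · intro x hx
    rw [F_derivWithin hδpos hδanti hδroot hδlim 1 hx]
    exact D_pos 1 x

lemma fixedPoints_F :
    {x | x ∈ Set.Icc (0:ℝ) 1 ∧ F δ 1 x = x} = {0, 1} := by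
  ext x
  simp only [Set.mem_setOf_eq, Set.mem_insert_iff, Set.mem_singleton_iff]
  constructor
  · rintro ⟨hx, hfix⟩
    by_contra hc
    push_neg at hc
    have hxIoo : x ∈ Set.Ioo (0:ℝ) 1 := mem_Ioo_of_Icc hx hc.1 hc.2
    obtain ⟨t, rfl⟩ := G_surj hδpos hδanti hδroot hxIoo
    rw [F_apply_G hδpos hδanti hδroot] at hfix
    have := (G_strictMono hδpos hδanti hδroot).injective hfix
    linarith
  · rintro (rfl | rfl)
    · exact ⟨⟨le_refl 0, zero_le_one⟩, F_zero_val hδpos hδanti hδroot 1⟩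
    · exact ⟨⟨zero_le_one, le_refl 1⟩, F_one_val hδpos hδanti hδroot 1⟩

include hδlim in
lemma gammaEqOne_F : GammaEqOne (F δ 1) (F δ (-1)) := by
  have h1 : ∀ n : ℕ, (_root_.Gamma (F δ 1) (F δ (-1)) n) ^ (1/(n:ℝ)) =
      Real.exp (W δ n * (1/(n:ℝ))) := by
    intro n
    rw [Gamma_F hδpos hδanti hδroot hδlim n,
      Real.rpow_def_of_pos (Real.exp_pos _), Real.log_exp]
  have h2 : Tendsto (fun n : ℕ => W δ n * (1/(n:ℝ))) atTop (nhds 0) := by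
    have hces := hδlim.cesaro
    apply hces.congr
    intro n
    rw [W_nat hδanti, one_div, mul_comm]
  have h3 := (Real.continuous_exp.tendsto 0).comp h2
  rw [Real.exp_zero] at h3
  rw [GammaEqOne]
  apply h3.congr
  intro n
  rw [Function.comp_apply, ← h1]

include hδlim in
lemma gamma_lower (hαle : ∀ n, (δ n) ≥ 0 → True) (n : ℕ) (hn : 1 ≤ n) (α : ℕ → ℝ)
    (hαδ : ∀ m, α m ≤ δ m) :
    Real.exp (α n * n) ≤ _root_.Gamma (F δ 1) (F δ (-1)) n := by
  rw [Gamma_F hδpos hδanti hδroot hδlim n]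
  apply Real.exp_le_exp.2
  have hsum : (n : ℝ) * δ n ≤ W δ n := by
    rw [W_nat hδanti]
    have := Finset.card_nsmul_le_sum (Finset.range n) δ (δ n)
      (fun k hk => hδanti (Finset.mem_range.1 hk).le)
    simpa [nsmul_eq_mul] using this
  have := hαδ n
  have hn1 : (1:ℝ) ≤ (n:ℝ) := by exact_mod_cast hn
  nlinarith

end Fin

end BorichevProof


end BorichevConstruction

/-- **Theorem 1 (Borichev).** For every monotone decreasing sequence `(α_n)` of positive
numbers tending to `0`, there is `f ∈ Diff₀[0,1]` whose fixed-point set is exactly `{0,1}`,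
with `γ(f) = 1`, and `Γ_n(f) ≥ exp (α_n · n)` for all `n ∈ ℕ`. -/
theorem growth_no_gap (α : ℕ → ℝ) (hpos : ∀ n, 0 < α n) (hanti : Antitone α)
    (hlim : Filter.Tendsto α Filter.atTop (nhds 0)) :
    ∃ f g : ℝ → ℝ, IsDiff01 f g ∧
      {x | x ∈ Set.Icc (0:ℝ) 1 ∧ f x = x} = {0, 1} ∧
      GammaEqOne f g ∧
      ∀ n : ℕ, 1 ≤ n → Real.exp (α n * n) ≤ Gamma f g n := by
  classical
  set δ : ℕ → ℝ := fun n => max (α n) (1 / Real.sqrt (n + 1)) with hδdef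
  have hδpos : ∀ n, 0 < δ n := fun n => lt_max_of_lt_left (hpos n)
  have hδanti : Antitone δ := by
    intro i j hij
    apply max_le_max (hanti hij)
    apply one_div_le_one_div_of_le
    · positivity
    · exact Real.sqrt_le_sqrt (by push_cast; exact_mod_cast by exact_mod_cast add_le_add_left (Nat.cast_le.2 hij) 1)
  have hδroot : ∀ n : ℕ, 1 / Real.sqrt (n + 1) ≤ δ n := fun n => le_max_right _ _
  have hδlim : Filter.Tendsto δ Filter.atTop (nhds 0) := by
    have hsqrt : Filter.Tendsto Real.sqrt Filter.atTop Filter.atTop := by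
      rw [Filter.tendsto_atTop_atTop]
      intro b
      refine ⟨b^2, fun a ha => ?_⟩
      rcases le_total b 0 with hb | hb
      · exact hb.trans (Real.sqrt_nonneg a)
      · rw [← Real.sqrt_sq hb]; exact Real.sqrt_le_sqrt ha
    have hn1 : Filter.Tendsto (fun n : ℕ => (n:ℝ) + 1) Filter.atTop Filter.atTop :=
      Filter.tendsto_atTop_add_const_right _ 1 tendsto_natCast_atTop_atTop
    have h2 : Filter.Tendsto (fun n : ℕ => 1 / Real.sqrt ((n:ℝ) + 1))
        Filter.atTop (nhds 0) := by
      simp only [one_div]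
      exact (hsqrt.comp hn1).inv_tendsto_atTop
    have := hlim.max h2
    rw [hδdef]
    simpa [one_div] using this
  refine ⟨BorichevProof.F δ 1, BorichevProof.F δ (-1),
    BorichevProof.isDiff01_F hδpos hδanti hδroot hδlim,
    BorichevProof.fixedPoints_F hδpos hδanti hδroot,
    BorichevProof.gammaEqOne_F hδpos hδanti hδroot hδlim, ?_⟩
  intro n hn
  exact BorichevProof.gamma_lower hδpos hδanti hδroot hδlim (fun _ _ => trivial) n hn α
    (fun m => le_max_left _ _)
end

section
/- Let f ∈ Diff₀[0,1] be a C²-smooth diffeomorphism with γ(f) = 1. Then there exists a constant C(f) > 0 such that Γ_n(f) ≤ C(f) · n² for all n ∈ ℕ. -/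
open Set Filter

local notation "II" => Set.Icc (0:ℝ) 1

lemma uD : UniqueDiffOn ℝ II := uniqueDiffOn_Icc zero_lt_one

-- iterate derivative
lemma iter_hasDeriv (f F' : ℝ → ℝ) (hm : MapsTo f II II)
    (hd : ∀ t ∈ II, HasDerivWithinAt f (F' t) II t) :
    ∀ (n : ℕ) (x : ℝ), x ∈ II →
      HasDerivWithinAt (f^[n]) (∏ k ∈ Finset.range n, F' (f^[k] x)) II x := by
  intro n
  induction n with
  | zero => intro x hx; simpa using hasDerivWithinAt_id x II
  | succ n ih =>
    intro x hx
    have h1 : HasDerivWithinAt (f^[n] ∘ f)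
        ((∏ k ∈ Finset.range n, F' (f^[k] (f x))) * F' x) II x :=
      (ih (f x) (hm hx)).comp x (hd x hx) hm
    rw [← Function.iterate_succ] at h1
    convert h1 using 1
    rw [Finset.prod_range_succ']
    simp [Function.iterate_succ_apply]

lemma iter_contDiffOn (f : ℝ → ℝ) (hm : MapsTo f II II) (hc : ContDiffOn ℝ 1 f II) :
    ∀ n : ℕ, ContDiffOn ℝ 1 (f^[n]) II := by
  intro n
  induction n with
  | zero => simpa using contDiffOn_id
  | succ n ih =>
    rw [Function.iterate_succ]
    exact ih.comp hc hm

lemma abs_deriv_le_sup (F : ℝ → ℝ) (hc : ContDiffOn ℝ 1 F II)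
    {x : ℝ} (hx : x ∈ II) : |derivWithin F II x| ≤ supAbsDeriv F := by
  have hco : ContinuousOn (fun t => |derivWithin F II t|) II :=
    (hc.continuousOn_derivWithin uD le_rfl).abs
  have hb : BddAbove ((fun t => |derivWithin F II t|) '' II) :=
    (isCompact_Icc.image_of_continuousOn hco).bddAbove
  exact le_csSup hb (mem_image_of_mem _ hx)

lemma inv_deriv_rel (f g : ℝ → ℝ) (hf : IsDiff01 f g) {z : ℝ} (hz : z ∈ II) :
    derivWithin f II (g z) * derivWithin g II z = 1 := by
  have hgz := hf.inv_mapsTo hz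
  have hdf : HasDerivWithinAt f (derivWithin f II (g z)) II (g z) :=
    (hf.contDiffOn.differentiableOn one_ne_zero (g z) hgz).hasDerivWithinAt
  have hdg : HasDerivWithinAt g (derivWithin g II z) II z :=
    (hf.inv_contDiffOn.differentiableOn one_ne_zero z hz).hasDerivWithinAt
  have hcomp : HasDerivWithinAt (f ∘ g)
      (derivWithin f II (g z) * derivWithin g II z) II z :=
    hdf.comp z hdg hf.inv_mapsTo
  have hid : HasDerivWithinAt id
      (derivWithin f II (g z) * derivWithin g II z) II z :=
    hcomp.congr (fun s hs => (hf.right_inv s hs).symm) (hf.right_inv z hz).symm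
  exact ((uD z hz).eq_deriv II hid (hasDerivWithinAt_id z II))

lemma fixed_deriv_one (f g : ℝ → ℝ) (hf : IsDiff01 f g) (hγ : GammaEqOne f g) :
    ∀ p ∈ II, f p = p → derivWithin f II p = 1 := by
  intro p hp hfp
  set c := derivWithin f II p with hcdef
  have hc : 0 < c := hf.deriv_pos p hp
  by_contra hne
  have hgp : g p = p := by
    have := hf.left_inv p hp; rwa [hfp] at this
  have hGp : derivWithin g II p = c⁻¹ := by
    have h := inv_deriv_rel f g hf hp
    rw [hgp, ← hcdef] at h
    field_simp at h ⊢
    linarith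
  have hF : ∀ t ∈ II, HasDerivWithinAt f (derivWithin f II t) II t := fun t ht =>
    (hf.contDiffOn.differentiableOn one_ne_zero t ht).hasDerivWithinAt
  have hG : ∀ t ∈ II, HasDerivWithinAt g (derivWithin g II t) II t := fun t ht =>
    (hf.inv_contDiffOn.differentiableOn one_ne_zero t ht).hasDerivWithinAt
  have hfn : ∀ n : ℕ, derivWithin (f^[n]) II p = c ^ n := by
    intro n
    have h := (iter_hasDeriv f _ hf.mapsTo hF n p hp).derivWithin (uD p hp)
    rw [h]
    simp [Function.iterate_fixed hfp, hcdef]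
  have hgn : ∀ n : ℕ, derivWithin (g^[n]) II p = c⁻¹ ^ n := by
    intro n
    have h := (iter_hasDeriv g _ hf.inv_mapsTo hG n p hp).derivWithin (uD p hp)
    rw [h]
    simp [Function.iterate_fixed hgp, hGp]
  set m := max c c⁻¹ with hmdef
  have hm0 : 0 < m := lt_max_of_lt_left hc
  have hm1 : 1 < m := by
    rcases lt_trichotomy c 1 with h | h | h
    · exact lt_max_of_lt_right ((one_lt_inv_iff₀).mpr ⟨hc, h⟩)
    · exact absurd h hne
    · exact lt_max_of_lt_left h
  have key : ∀ n : ℕ, m ^ n ≤ Gamma f g n := by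
    intro n
    rcases max_choice c c⁻¹ with h | h <;> rw [hmdef, h]
    · calc c ^ n = |derivWithin (f^[n]) II p| := by
            rw [hfn n, abs_of_pos (pow_pos hc n)]
        _ ≤ supAbsDeriv (f^[n]) :=
            abs_deriv_le_sup _ (iter_contDiffOn f hf.mapsTo hf.contDiffOn n) hp
        _ ≤ Gamma f g n := le_max_left _ _
    · calc c⁻¹ ^ n = |derivWithin (g^[n]) II p| := by
            rw [hgn n, abs_of_pos (pow_pos (inv_pos.mpr hc) n)]
        _ ≤ supAbsDeriv (g^[n]) :=
            abs_deriv_le_sup _ (iter_contDiffOn g hf.inv_mapsTo hf.inv_contDiffOn n) hp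
        _ ≤ Gamma f g n := le_max_right _ _
  have hev := (hγ.eventually (gt_mem_nhds hm1)).and (eventually_ge_atTop 1)
  obtain ⟨n, hlt, hn1⟩ := hev.exists
  have hn0 : (n:ℝ) ≠ 0 := Nat.cast_ne_zero.mpr (by omega)
  have hmn : m = (m ^ n) ^ (1/(n:ℝ)) := by
    rw [← Real.rpow_natCast m n, ← Real.rpow_mul hm0.le, mul_one_div, div_self hn0,
      Real.rpow_one]
  have hle : m ≤ (Gamma f g n) ^ (1/(n:ℝ)) := by
    rw [hmn]
    exact Real.rpow_le_rpow (pow_nonneg hm0.le n) (key n) (by positivity)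
  linarith

lemma taylor_bd (u U' : ℝ → ℝ) (L : ℝ) (hL0 : 0 ≤ L)
    (hd : ∀ t ∈ II, HasDerivWithinAt u (U' t) II t)
    (hLip : ∀ s ∈ II, ∀ t ∈ II, |U' s - U' t| ≤ L * |s - t|)
    {t y : ℝ} (ht : t ∈ II) (hy : y ∈ II) :
    |u y - u t - U' t * (y - t)| ≤ L * (y - t) ^ 2 := by
  set S := Icc (min t y) (max t y) with hS
  have hSsub : S ⊆ II := by
    intro s hs
    constructor
    · exact le_trans (le_min ht.1 hy.1) hs.1
    · exact le_trans hs.2 (max_le ht.2 hy.2)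
  have htS : t ∈ S := ⟨min_le_left _ _, le_max_left _ _⟩
  have hyS : y ∈ S := ⟨min_le_right _ _, le_max_right _ _⟩
  have hder : ∀ s ∈ S, HasDerivWithinAt (fun z => u z - U' t * z) (U' s - U' t) S s := by
    intro s hs
    exact ((hd s (hSsub hs)).mono hSsub).sub
      (((hasDerivWithinAt_id s S).const_mul (U' t)).congr_deriv (mul_one _))
  have hbd : ∀ s ∈ S, ‖U' s - U' t‖ ≤ L * |y - t| := by
    intro s hs
    refine le_trans (hLip s (hSsub hs) t ht) ?_
    have h1 : |s - t| ≤ |y - t| := by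
      rw [abs_sub_le_iff]
      constructor
      · rcases le_total t y with h | h
        · calc s - t ≤ max t y - t := by have := hs.2; linarith
            _ = y - t := by rw [max_eq_right h]
            _ ≤ |y - t| := le_abs_self _
        · calc s - t ≤ max t y - t := by have := hs.2; linarith
            _ = 0 := by rw [max_eq_left h]; ring
            _ ≤ |y - t| := abs_nonneg _
      · rcases le_total t y with h | h
        · calc t - s ≤ t - min t y := by have := hs.1; linarith
            _ = 0 := by rw [min_eq_left h]; ring
            _ ≤ |y - t| := abs_nonneg _
        · calc t - s ≤ t - min t y := by have := hs.1; linarith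
            _ = t - y := by rw [min_eq_right h]
            _ ≤ |y - t| := by rw [abs_sub_comm]; exact le_abs_self _
    exact mul_le_mul_of_nonneg_left h1 hL0
  have := (convex_Icc _ _).norm_image_sub_le_of_norm_hasDerivWithin_le hder hbd htS hyS
  have heq : (fun z => u z - U' t * z) y - (fun z => u z - U' t * z) t
      = u y - u t - U' t * (y - t) := by ring
  rw [heq] at this
  calc |u y - u t - U' t * (y - t)| ≤ L * |y - t| * ‖y - t‖ := this
    _ = L * (y - t) ^ 2 := by
        rw [Real.norm_eq_abs, mul_assoc, ← abs_mul]
        rw [show (y-t)*(y-t) = (y-t)^2 by ring, abs_of_nonneg (sq_nonneg _)]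

lemma landau (u U' : ℝ → ℝ) (L : ℝ) (hL0 : 0 < L)
    (hd : ∀ t ∈ II, HasDerivWithinAt u (U' t) II t)
    (hLip : ∀ s ∈ II, ∀ t ∈ II, |U' s - U' t| ≤ L * |s - t|)
    (hzero : ∀ t ∈ II, u t = 0 → U' t = 0)
    (h0 : u 0 = 0) (h1 : u 1 = 0)
    {t : ℝ} (ht : t ∈ II) (hut : 0 < u t) :
    U' t ^ 2 ≤ 4 * L * u t := by
  have hcont : ContinuousOn u II := fun s hs => (hd s hs).continuousWithinAt
  have hy : ∃ y ∈ II, 0 ≤ u y ∧ y = t - U' t / (2 * L) := by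
    rcases le_or_gt 0 (U' t) with hU | hU
    · -- left zero
      set A := Icc (0:ℝ) t ∩ u ⁻¹' {0} with hA
      have hsubII : Icc (0:ℝ) t ⊆ II := Icc_subset_Icc le_rfl ht.2
      have hAne : (0:ℝ) ∈ A := ⟨⟨le_refl _, ht.1⟩, h0⟩
      have hAcl : IsClosed A :=
        (hcont.mono hsubII).preimage_isClosed_of_isClosed isClosed_Icc isClosed_singleton
      have hAbdd : BddAbove A := (bddAbove_Icc).mono inter_subset_left
      set a := sSup A with ha
      have haA : a ∈ A := hAcl.csSup_mem ⟨0, hAne⟩ hAbdd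
      have haII : a ∈ II := hsubII haA.1
      have hua : u a = 0 := haA.2
      have hU'a : U' a = 0 := hzero a haII hua
      have hat : a ≤ t := haA.1.2
      have hnn : ∀ s ∈ Icc a t, 0 ≤ u s := by
        intro s hs
        by_contra hneg
        push_neg at hneg
        have hsne : a < s := lt_of_le_of_ne hs.1 (by rintro rfl; linarith)
        have := intermediate_value_Icc hs.2 (hcont.mono (Icc_subset_Icc (le_trans haII.1 hs.1) ht.2))
        obtain ⟨z, hz, huz⟩ := this ⟨hneg.le, hut.le⟩
        have hzA : z ∈ A := ⟨⟨le_trans haII.1 (le_trans hs.1 hz.1), hz.2⟩, huz⟩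
        have := le_csSup hAbdd hzA
        linarith [hz.1]
      have hUb : U' t ≤ L * (t - a) := by
        have := hLip t ht a haII
        rw [hU'a, sub_zero] at this
        calc U' t ≤ |U' t| := le_abs_self _
          _ ≤ L * |t - a| := this
          _ = L * (t - a) := by rw [abs_of_nonneg (by linarith)]
      refine ⟨t - U' t / (2 * L), ⟨?_, ?_⟩, ?_, rfl⟩
      · have : U' t / (2 * L) ≤ (t - a) / 2 := by
          rw [div_le_div_iff₀ (by linarith) (by norm_num)]
          linarith [hUb]
        nlinarith [haII.1]
      · have : 0 ≤ U' t / (2 * L) := div_nonneg hU (by linarith)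
        linarith [ht.2]
      · refine hnn _ ⟨?_, ?_⟩
        · have : U' t / (2 * L) ≤ (t - a) / 2 := by
            rw [div_le_div_iff₀ (by linarith) (by norm_num)]
            linarith [hUb]
          linarith
        · have : 0 ≤ U' t / (2 * L) := div_nonneg hU (by linarith)
          linarith
    · -- right zero
      set B := Icc t (1:ℝ) ∩ u ⁻¹' {0} with hB
      have hsubII : Icc t (1:ℝ) ⊆ II := Icc_subset_Icc ht.1 le_rfl
      have hBne : (1:ℝ) ∈ B := ⟨⟨ht.2, le_refl _⟩, h1⟩
      have hBcl : IsClosed B :=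
        (hcont.mono hsubII).preimage_isClosed_of_isClosed isClosed_Icc isClosed_singleton
      have hBbdd : BddBelow B := (bddBelow_Icc).mono inter_subset_left
      set b := sInf B with hb
      have hbB : b ∈ B := hBcl.csInf_mem ⟨1, hBne⟩ hBbdd
      have hbII : b ∈ II := hsubII hbB.1
      have hub : u b = 0 := hbB.2
      have hU'b : U' b = 0 := hzero b hbII hub
      have htb : t ≤ b := hbB.1.1
      have hnn : ∀ s ∈ Icc t b, 0 ≤ u s := by
        intro s hs
        by_contra hneg
        push_neg at hneg
        have hsne : s < b := lt_of_le_of_ne hs.2 (by rintro rfl; linarith)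
        have := intermediate_value_Icc' hs.1 (hcont.mono (Icc_subset_Icc ht.1 (le_trans hs.2 hbII.2)))
        obtain ⟨z, hz, huz⟩ := this ⟨hneg.le, hut.le⟩
        have hzB : z ∈ B := ⟨⟨hz.1, le_trans hz.2 (le_trans hs.2 hbII.2)⟩, huz⟩
        have := csInf_le hBbdd hzB
        linarith [hz.2]
      have hUb : -U' t ≤ L * (b - t) := by
        have := hLip t ht b hbII
        rw [hU'b, sub_zero] at this
        calc -U' t ≤ |U' t| := neg_le_abs _
          _ ≤ L * |t - b| := this
          _ = L * (b - t) := by rw [abs_of_nonpos (by linarith), neg_sub]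
      refine ⟨t - U' t / (2 * L), ⟨?_, ?_⟩, ?_, rfl⟩
      · have : U' t / (2 * L) ≤ 0 := div_nonpos_of_nonpos_of_nonneg hU.le (by linarith)
        linarith [ht.1]
      · have : -U' t / (2 * L) ≤ (b - t) / 2 := by
          rw [div_le_div_iff₀ (by linarith) (by norm_num)]
          linarith [hUb]
        have h2 : t - U' t / (2 * L) = t + (-U' t) / (2*L) := by ring
        rw [h2]
        have : (-U' t) / (2 * L) ≤ (b - t)/2 := by
          rw [div_le_div_iff₀ (by linarith) (by norm_num)]
          linarith [hUb]
        linarith [hbII.2]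
      · refine hnn _ ⟨?_, ?_⟩
        · have : U' t / (2 * L) ≤ 0 := div_nonpos_of_nonpos_of_nonneg hU.le (by linarith)
          linarith
        · have h5 : (-U' t) / (2 * L) ≤ (b - t)/2 := by
            rw [div_le_div_iff₀ (by linarith) (by norm_num)]
            linarith [hUb]
          have h6 : (-U' t)/(2*L) = -(U' t/(2*L)) := by ring
          linarith
  obtain ⟨y, hyII, huy, hyeq⟩ := hy
  have htay := taylor_bd u U' L hL0.le hd hLip ht hyII
  have e1 : u y - u t - U' t * (y - t) ≤ L * (y - t) ^ 2 := (abs_le.1 htay).2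
  have hyt : y - t = -(U' t / (2 * L)) := by rw [hyeq]; ring
  rw [hyt] at e1
  have id1 : U' t * -(U' t / (2 * L)) = -(U' t ^ 2 / (2 * L)) := by
    field_simp
  have id2 : L * (-(U' t / (2 * L))) ^ 2 = U' t ^ 2 / (4 * L) := by
    field_simp; ring
  rw [id1, id2] at e1
  have id3 : U' t ^ 2 / (2 * L) - U' t ^ 2 / (4 * L) = U' t ^ 2 / (4 * L) := by
    field_simp; ring
  have key : U' t ^ 2 / (4 * L) ≤ u t := by linarith
  rw [div_le_iff₀ (by positivity)] at key
  linarith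

lemma sqrt_lip (u U' : ℝ → ℝ) (L : ℝ) (hL0 : 0 < L)
    (hd : ∀ t ∈ II, HasDerivWithinAt u (U' t) II t)
    (hLan : ∀ t ∈ II, 0 < u t → U' t ^ 2 ≤ 4 * L * u t)
    {a b : ℝ} (ha : a ∈ II) (hb : b ∈ II) (hab : a ≤ b)
    (hpos : ∀ s ∈ Icc a b, 0 < u s) :
    |Real.sqrt (u b) - Real.sqrt (u a)| ≤ Real.sqrt L * (b - a) := by
  have hsub : Icc a b ⊆ II := Icc_subset_Icc ha.1 hb.2
  have hder : ∀ s ∈ Icc a b, HasDerivWithinAt (fun z => Real.sqrt (u z))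
      (U' s / (2 * Real.sqrt (u s))) (Icc a b) s :=
    fun s hs => ((hd s (hsub hs)).mono hsub).sqrt (ne_of_gt (hpos s hs))
  have hbd : ∀ s ∈ Icc a b, ‖U' s / (2 * Real.sqrt (u s))‖ ≤ Real.sqrt L := by
    intro s hs
    have hus := hpos s hs
    have h1 : |U' s| ≤ 2 * Real.sqrt L * Real.sqrt (u s) := by
      have h2 : U' s ^ 2 ≤ 4 * L * u s := hLan s (hsub hs) hus
      have h3 : |U' s| = Real.sqrt (U' s ^ 2) := (Real.sqrt_sq_eq_abs _).symm
      rw [h3]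
      have h4 : Real.sqrt (U' s ^ 2) ≤ Real.sqrt (4 * L * u s) := Real.sqrt_le_sqrt h2
      have h5 : Real.sqrt (4 * L * u s) = 2 * Real.sqrt L * Real.sqrt (u s) := by
        rw [show 4 * L * u s = (2:ℝ)^2 * (L * u s) by ring,
          Real.sqrt_mul (by positivity), Real.sqrt_sq (by norm_num),
          Real.sqrt_mul hL0.le]
        ring
      linarith
    have hsq : 0 < Real.sqrt (u s) := Real.sqrt_pos.mpr hus
    rw [Real.norm_eq_abs, abs_div, abs_of_pos (by positivity : (0:ℝ) < 2 * Real.sqrt (u s)),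
      div_le_iff₀ (by positivity)]
    calc |U' s| ≤ 2 * Real.sqrt L * Real.sqrt (u s) := h1
      _ = Real.sqrt L * (2 * Real.sqrt (u s)) := by ring
  have := (convex_Icc a b).norm_image_sub_le_of_norm_hasDerivWithin_le hder hbd
    ⟨le_rfl, hab⟩ ⟨hab, le_rfl⟩
  rw [Real.norm_eq_abs, Real.norm_eq_abs] at this
  exact this.trans (le_of_eq (by rw [abs_of_nonneg (sub_nonneg.mpr hab)]))

lemma seq_bound (v : ℕ → ℝ) (K : ℝ) (hK : 0 ≤ K) (hv : ∀ k, 0 < v k)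
    (hv1 : ∀ k, v k ≤ 1) (hrec : ∀ k, v (k+1) ≤ v k * (1 + K * v k)) :
    ∀ n : ℕ, 1 ≤ n → v n ≤ (2 + 2*K) * n * v 0 := by
  have hstep : ∀ k, (v k)⁻¹ - K ≤ (v (k+1))⁻¹ := by
    intro k
    have hvk := hv k; have hvk1 := hv (k+1)
    rcases le_or_gt (v (k+1)) (v k) with h | h
    · have h2 : (v k)⁻¹ ≤ (v (k+1))⁻¹ := by
        apply inv_anti₀ hvk1 h
      linarith
    · have e1 : ((v k)⁻¹ - K) * (v k * v (k+1)) = v (k+1) - K * v k * v (k+1) := by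
        field_simp
      have e2 : (v (k+1))⁻¹ * (v k * v (k+1)) = v k := by
        field_simp
      have e3 : v (k+1) - K * v k * v (k+1) ≤ v k := by nlinarith [hrec k]
      have hpos : 0 < v k * v (k+1) := mul_pos hvk hvk1
      have e4 : ((v k)⁻¹ - K) * (v k * v (k+1)) ≤ (v (k+1))⁻¹ * (v k * v (k+1)) := by
        rw [e1, e2]; exact e3
      exact le_of_mul_le_mul_right e4 hpos
  have hiter : ∀ k : ℕ, (v 0)⁻¹ - K * k ≤ (v k)⁻¹ := by
    intro k
    induction k with
    | zero => simp
    | succ k ih =>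
      have := hstep k
      push_cast
      push_cast at ih
      linarith
  intro n hn
  have hn' : (1:ℝ) ≤ n := by exact_mod_cast hn
  have hv00 := hv 0
  by_cases hcase : 2*(K+1)*n ≤ (v 0)⁻¹
  · have h1 : K * n ≤ (v 0)⁻¹ / 2 := by nlinarith
    have h2 : (v 0)⁻¹ / 2 ≤ (v n)⁻¹ := by
      have := hiter n; linarith
    have hx : (v n) * ((v 0)⁻¹ / 2) ≤ v n * (v n)⁻¹ :=
      mul_le_mul_of_nonneg_left h2 (hv n).le
    rw [mul_inv_cancel₀ (ne_of_gt (hv n))] at hx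
    have h4 : v n ≤ 2 * v 0 := by
      nlinarith [mul_inv_cancel₀ (ne_of_gt hv00), hx, hv n]
    have h5 : (2:ℝ) ≤ (2+2*K)*(n:ℝ) := by nlinarith
    have h6 := mul_le_mul_of_nonneg_right h5 hv00.le
    calc v n ≤ 2 * v 0 := h4
      _ ≤ (2+2*K)*(n:ℝ) * v 0 := by linarith
  · push_neg at hcase
    have h1 : 1 < 2*(K+1)*n * v 0 := by
      have := mul_lt_mul_of_pos_right hcase hv00
      rw [inv_mul_cancel₀ (ne_of_gt hv00)] at this
      linarith
    have := hv1 n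
    nlinarith

lemma log_lip {δ a b : ℝ} (hδ : 0 < δ) (ha : δ ≤ a) (hb : δ ≤ b) :
    |Real.log a - Real.log b| ≤ (1/δ) * |a - b| := by
  have key : ∀ p q : ℝ, δ ≤ p → δ ≤ q → p ≤ q →
      Real.log q - Real.log p ≤ (1/δ) * (q - p) := by
    intro p q hp hq hpq
    have hp0 : 0 < p := lt_of_lt_of_le hδ hp
    have hq0 : 0 < q := lt_of_lt_of_le hδ hq
    have h1 : Real.log q - Real.log p = Real.log (q / p) := (Real.log_div hq0.ne' hp0.ne').symm
    rw [h1]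
    have h2 : Real.log (q/p) ≤ q/p - 1 := Real.log_le_sub_one_of_pos (by positivity)
    have h3 : q/p - 1 = (q - p)/p := by field_simp
    have h4 : (q - p)/p ≤ (q - p)/δ := by
      apply div_le_div_of_nonneg_left (by linarith) hδ hp
    calc Real.log (q/p) ≤ (q-p)/p := by linarith
      _ ≤ (q-p)/δ := h4
      _ = (1/δ) * (q - p) := by ring
  rcases le_total a b with h | h
  · rw [abs_sub_comm, abs_sub_comm a b,
      abs_of_nonneg (sub_nonneg.mpr (Real.log_le_log (lt_of_lt_of_le hδ ha) h)),
      abs_of_nonneg (sub_nonneg.mpr h)]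
    exact key a b ha hb h
  · rw [abs_of_nonneg (sub_nonneg.mpr (Real.log_le_log (lt_of_lt_of_le hδ hb) h)),
      abs_of_nonneg (sub_nonneg.mpr h)]
    exact key b a hb ha h

lemma orbit_prod_bound (F' : ℝ → ℝ) (δ L : ℝ) (hδ : 0 < δ) (hL0 : 0 < L)
    (hδle : ∀ t ∈ II, δ ≤ F' t)
    (hLipF : ∀ s ∈ II, ∀ t ∈ II, |F' s - F' t| ≤ L * |s - t|)
    (x : ℕ → ℝ) (hxII : ∀ k, x k ∈ II)
    (ℓ : ℕ → ℝ) (hℓpos : ∀ k, 0 < ℓ k) (hℓ1 : ∀ k, ℓ k ≤ 1)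
    (hsum : ∀ m : ℕ, ∑ k ∈ Finset.range m, ℓ k ≤ 1)
    (η : ℕ → ℝ) (hηmem : ∀ k, η k ∈ II) (hηdist : ∀ k, |x k - η k| ≤ ℓ k)
    (hmvt : ∀ k, ℓ (k+1) = F' (η k) * ℓ k)
    (hvlip : ∀ k, |Real.sqrt (ℓ (k+1)) - Real.sqrt (ℓ k)| ≤ Real.sqrt L * ℓ k)
    (n : ℕ) (hn : 1 ≤ n) :
    (Real.exp (L/δ) * (max (2 + 2*Real.sqrt L) (2 + 2*(Real.sqrt L/δ)))^2 * (n:ℝ)^2)⁻¹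
      ≤ (∏ k ∈ Finset.range n, F' (x k)) ∧
    (∏ k ∈ Finset.range n, F' (x k))
      ≤ Real.exp (L/δ) * (max (2 + 2*Real.sqrt L) (2 + 2*(Real.sqrt L/δ)))^2 * (n:ℝ)^2 := by
  set K := Real.sqrt L with hK
  have hK0 : 0 ≤ K := Real.sqrt_nonneg _
  set Cm := max (2 + 2*K) (2 + 2*(K/δ)) with hCm
  have hCm2 : (2:ℝ) ≤ Cm := le_trans (by linarith) (le_max_left _ _)
  set v : ℕ → ℝ := fun k => Real.sqrt (ℓ k) with hv
  have hvpos : ∀ k, 0 < v k := fun k => Real.sqrt_pos.mpr (hℓpos k)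
  have hv1 : ∀ k, v k ≤ 1 := fun k => by
    rw [hv]; simpa using Real.sqrt_le_sqrt (hℓ1 k)
  have hv2 : ∀ k, v k ^ 2 = ℓ k := fun k => Real.sq_sqrt (hℓpos k).le
  -- upper recursion
  have hrecU : ∀ k, v (k+1) ≤ v k * (1 + K * v k) := by
    intro k
    have : v (k+1) ≤ v k + K * ℓ k := by
      simp only [hv]
      linarith [(abs_le.1 (hvlip k)).2]
    calc v (k+1) ≤ v k + K * ℓ k := this
      _ = v k * (1 + K * v k) := by rw [← hv2 k]; ring
  have hupper : v n ≤ (2 + 2*K) * n * v 0 :=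
    seq_bound v K hK0 hvpos hv1 hrecU n hn
  -- lower recursion (reversed sequence)
  have hδF : ∀ k, δ * ℓ k ≤ ℓ (k+1) := by
    intro k
    rw [hmvt k]
    exact mul_le_mul_of_nonneg_right (hδle _ (hηmem k)) (hℓpos k).le
  have hrecD : ∀ k, v k ≤ v (k+1) * (1 + (K/δ) * v (k+1)) := by
    intro k
    have h2 : v k ≤ v (k+1) + K * ℓ k := by
      simp only [hv]
      linarith [(abs_le.1 (hvlip k)).1]
    have h3 : K * ℓ k ≤ (K/δ) * ℓ (k+1) := by
      rw [div_mul_eq_mul_div, le_div_iff₀ hδ]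
      calc K * ℓ k * δ = K * (δ * ℓ k) := by ring
        _ ≤ K * ℓ (k+1) := mul_le_mul_of_nonneg_left (hδF k) hK0
    calc v k ≤ v (k+1) + (K/δ) * ℓ (k+1) := by linarith
      _ = v (k+1) * (1 + (K/δ) * v (k+1)) := by rw [← hv2 (k+1)]; ring
  set w : ℕ → ℝ := fun j => v (n - j) with hw
  have hwrec : ∀ j, w (j+1) ≤ w j * (1 + (K/δ) * w j) := by
    intro j
    rcases lt_or_ge j n with h | h
    · have h1 : n - (j+1) + 1 = n - j := by omega
      have := hrecD (n - (j+1))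
      rw [h1] at this
      simpa [hw] using this
    · have h1 : n - (j+1) = n - j := by omega
      rw [hw]
      simp only [h1]
      nlinarith [mul_nonneg (div_nonneg hK0 hδ.le)
        (mul_nonneg (hvpos (n-j)).le (hvpos (n-j)).le)]
  have hlowseq : w n ≤ (2 + 2*(K/δ)) * n * w 0 :=
    seq_bound w (K/δ) (div_nonneg hK0 hδ.le) (fun j => hvpos _) (fun j => hv1 _) hwrec n hn
  have hlower : v 0 ≤ (2 + 2*(K/δ)) * n * v n := by
    have e0 : w n = v 0 := by rw [hw]; simp
    have e1 : w 0 = v n := by rw [hw]; simp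
    rw [e0, e1] at hlowseq
    exact hlowseq
  -- products
  have hF'pos : ∀ t ∈ II, 0 < F' t := fun t ht => lt_of_lt_of_le hδ (hδle t ht)
  set P := ∏ k ∈ Finset.range n, F' (x k) with hP
  set Q := ∏ k ∈ Finset.range n, F' (η k) with hQ
  have hPpos : 0 < P := Finset.prod_pos (fun k _ => hF'pos _ (hxII k))
  have hQpos : 0 < Q := Finset.prod_pos (fun k _ => hF'pos _ (hηmem k))
  have hQℓ : ∀ m : ℕ, (∏ k ∈ Finset.range m, F' (η k)) * ℓ 0 = ℓ m := by
    intro m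
    induction m with
    | zero => simp
    | succ m ih =>
      rw [Finset.prod_range_succ, hmvt m, ← ih]
      ring
  have hQval : Q = ℓ n / ℓ 0 := by
    rw [hQ, eq_div_iff (hℓpos 0).ne']
    exact hQℓ n
  -- log comparison
  have hlogPQ : |Real.log P - Real.log Q| ≤ L/δ := by
    rw [hP, hQ, Real.log_prod (fun k _ => (hF'pos _ (hxII k)).ne'),
      Real.log_prod (fun k _ => (hF'pos _ (hηmem k)).ne'), ← Finset.sum_sub_distrib]
    refine le_trans (Finset.abs_sum_le_sum_abs _ _) ?_
    have hterm : ∀ k ∈ Finset.range n,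
        |Real.log (F' (x k)) - Real.log (F' (η k))| ≤ (L/δ) * ℓ k := by
      intro k _
      refine le_trans (log_lip hδ (hδle _ (hxII k)) (hδle _ (hηmem k))) ?_
      have h1 : |F' (x k) - F' (η k)| ≤ L * ℓ k :=
        le_trans (hLipF _ (hxII k) _ (hηmem k)) (mul_le_mul_of_nonneg_left (hηdist k) hL0.le)
      calc (1/δ) * |F' (x k) - F' (η k)| ≤ (1/δ) * (L * ℓ k) := by
            apply mul_le_mul_of_nonneg_left h1 (by positivity)
        _ = (L/δ) * ℓ k := by ring
    refine le_trans (Finset.sum_le_sum hterm) ?_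
    rw [← Finset.mul_sum]
    calc (L/δ) * ∑ k ∈ Finset.range n, ℓ k ≤ (L/δ) * 1 :=
          mul_le_mul_of_nonneg_left (hsum n) (by positivity)
      _ = L/δ := mul_one _
  -- ratio bounds
  have hn0 : (0:ℝ) < n := by exact_mod_cast hn
  have hCm0 : (0:ℝ) < Cm := lt_of_lt_of_le two_pos hCm2
  have hQup : Q ≤ (Cm * n)^2 := by
    rw [hQval, ← hv2 n, ← hv2 0, div_le_iff₀ (pow_pos (hvpos 0) 2)]
    have h1 : v n ≤ Cm * n * v 0 := by
      refine le_trans hupper ?_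
      exact mul_le_mul_of_nonneg_right
        (mul_le_mul_of_nonneg_right (le_max_left _ _) hn0.le) (hvpos 0).le
    calc v n ^ 2 ≤ (Cm * n * v 0)^2 := by
          nlinarith [mul_le_mul h1 h1 (hvpos n).le
            (mul_nonneg (mul_nonneg hCm0.le hn0.le) (hvpos 0).le)]
      _ = (Cm * n)^2 * v 0 ^2 := by ring
  have hQdown : ((Cm * n)^2)⁻¹ ≤ Q := by
    rw [hQval, ← hv2 n, ← hv2 0, le_div_iff₀ (pow_pos (hvpos 0) 2)]
    have h1 : v 0 ≤ Cm * n * v n := by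
      refine le_trans hlower ?_
      exact mul_le_mul_of_nonneg_right
        (mul_le_mul_of_nonneg_right (le_max_right _ _) hn0.le) (hvpos n).le
    have hv0sq : v 0 ^ 2 ≤ (Cm*n)^2 * v n ^2 := by
      calc v 0 ^ 2 ≤ (Cm * n * v n)^2 := by
            nlinarith [mul_le_mul h1 h1 (hvpos 0).le
              (mul_nonneg (mul_nonneg hCm0.le hn0.le) (hvpos n).le)]
        _ = (Cm * n)^2 * v n ^2 := by ring
    have hA : (0:ℝ) < (Cm*(n:ℝ))^2 := pow_pos (mul_pos hCm0 hn0) 2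
    have h2 : ((Cm*(n:ℝ))^2)⁻¹ * v 0^2 ≤ ((Cm*(n:ℝ))^2)⁻¹ * ((Cm*(n:ℝ))^2 * v n^2) :=
      mul_le_mul_of_nonneg_left hv0sq (by positivity)
    rw [← mul_assoc, inv_mul_cancel₀ hA.ne', one_mul] at h2
    exact h2
  -- conclude
  have hPup : P ≤ Real.exp (L/δ) * Q := by
    have h1 : Real.log P ≤ Real.log Q + L/δ := by
      have := (abs_le.1 hlogPQ).2; linarith
    calc P = Real.exp (Real.log P) := (Real.exp_log hPpos).symm
      _ ≤ Real.exp (Real.log Q + L/δ) := Real.exp_le_exp.mpr h1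
      _ = Real.exp (L/δ) * Q := by rw [Real.exp_add, Real.exp_log hQpos]; ring
  have hPdown : Real.exp (-(L/δ)) * Q ≤ P := by
    have h1 : Real.log Q - L/δ ≤ Real.log P := by
      have := (abs_le.1 hlogPQ).1; linarith
    calc Real.exp (-(L/δ)) * Q = Real.exp (Real.log Q - L/δ) := by
          rw [Real.exp_sub, Real.exp_log hQpos, Real.exp_neg]; ring
      _ ≤ Real.exp (Real.log P) := Real.exp_le_exp.mpr h1
      _ = P := Real.exp_log hPpos
  constructor
  · have h2 : (Real.exp (L/δ) * Cm^2 * (n:ℝ)^2)⁻¹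
        = Real.exp (-(L/δ)) * ((Cm * n)^2)⁻¹ := by
      rw [Real.exp_neg]
      rw [mul_pow]
      field_simp
    rw [h2]
    calc Real.exp (-(L/δ)) * ((Cm * n)^2)⁻¹ ≤ Real.exp (-(L/δ)) * Q :=
          mul_le_mul_of_nonneg_left hQdown (Real.exp_nonneg _)
      _ ≤ P := hPdown
  · calc P ≤ Real.exp (L/δ) * Q := hPup
      _ ≤ Real.exp (L/δ) * (Cm * n)^2 :=
          mul_le_mul_of_nonneg_left hQup (Real.exp_nonneg _)
      _ = Real.exp (L/δ) * Cm^2 * (n:ℝ)^2 := by ring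

lemma core_prod (f g : ℝ → ℝ) (hf : IsDiff01 f g) (hC2 : ContDiffOn ℝ 2 f II)
    (hfix : ∀ p ∈ II, f p = p → derivWithin f II p = 1) :
    ∃ D : ℝ, 1 ≤ D ∧ ∀ n : ℕ, 1 ≤ n → ∀ x ∈ II,
      (D * (n:ℝ)^2)⁻¹ ≤ (∏ k ∈ Finset.range n, derivWithin f II (f^[k] x)) ∧
      (∏ k ∈ Finset.range n, derivWithin f II (f^[k] x)) ≤ D * (n:ℝ)^2 := by
  set F' := derivWithin f II with hF'def
  have hFd : ∀ t ∈ II, HasDerivWithinAt f (F' t) II t := fun t ht =>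
    (hf.contDiffOn.differentiableOn one_ne_zero t ht).hasDerivWithinAt
  have hF'cont : ContinuousOn F' II := hf.contDiffOn.continuousOn_derivWithin uD le_rfl
  have hne : (II).Nonempty := ⟨0, by constructor <;> norm_num⟩
  obtain ⟨z, hz, hzmin'⟩ := isCompact_Icc.exists_isMinOn hne hF'cont
  have hzmin : ∀ t ∈ II, F' z ≤ F' t := fun t ht => hzmin' ht
  set δ := F' z with hδdef
  have hδ : 0 < δ := hf.deriv_pos z hz
  have hδle : ∀ t ∈ II, δ ≤ F' t := hzmin
  have hC1' : ContDiffOn ℝ 1 F' II := hC2.derivWithin uD (by norm_num)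
  have hF''d : ∀ t ∈ II, HasDerivWithinAt F' (derivWithin F' II t) II t := fun t ht =>
    (hC1'.differentiableOn one_ne_zero t ht).hasDerivWithinAt
  have habs : ContinuousOn (fun t => |derivWithin F' II t|) II :=
    (hC1'.continuousOn_derivWithin uD le_rfl).abs
  obtain ⟨wm, hwm, hwmax'⟩ := isCompact_Icc.exists_isMaxOn hne habs
  have hwmax : ∀ t ∈ II, |derivWithin F' II t| ≤ |derivWithin F' II wm| := fun t ht => hwmax' ht
  set L := max (|derivWithin F' II wm|) 1 with hLdef
  have hL0 : 0 < L := lt_of_lt_of_le one_pos (le_max_right _ _)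
  have hLipF : ∀ s ∈ II, ∀ t ∈ II, |F' s - F' t| ≤ L * |s - t| := by
    intro s hs t ht
    have := (convex_Icc (0:ℝ) 1).norm_image_sub_le_of_norm_hasDerivWithin_le hF''d
      (fun y hy => show ‖derivWithin F' II y‖ ≤ L by
        rw [Real.norm_eq_abs, hLdef]
        exact le_trans (hwmax y hy) (le_max_left _ _)) ht hs
    simpa [Real.norm_eq_abs] using this
  set u : ℝ → ℝ := fun t => f t - t with hudef
  set U' : ℝ → ℝ := fun t => F' t - 1 with hU'def
  have hud : ∀ t ∈ II, HasDerivWithinAt u (U' t) II t := fun t ht =>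
    (hFd t ht).sub (hasDerivWithinAt_id t II)
  have huLip : ∀ s ∈ II, ∀ t ∈ II, |U' s - U' t| ≤ L * |s - t| := by
    intro s hs t ht
    have h := hLipF s hs t ht
    simp only [hU'def]
    rw [show (F' s - 1) - (F' t - 1) = F' s - F' t by ring]
    exact h
  have hzero : ∀ t ∈ II, u t = 0 → U' t = 0 := by
    intro t ht h
    have hft : f t = t := by
      have : f t - t = 0 := h
      linarith
    have e : U' t = F' t - 1 := rfl
    rw [e, hfix t ht hft]
    ring
  have h0 : u 0 = 0 := by simp only [hudef]; rw [hf.map_zero]; ring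
  have h1 : u 1 = 0 := by simp only [hudef]; rw [hf.map_one]; ring
  have hmono : StrictMonoOn f II := by
    apply strictMonoOn_of_deriv_pos (convex_Icc 0 1) hf.contDiffOn.continuousOn
    intro t ht
    rw [interior_Icc] at ht
    rw [← derivWithin_of_mem_nhds (Icc_mem_nhds ht.1 ht.2)]
    exact hf.deriv_pos t (Ioo_subset_Icc_self ht)
  have hLanPos : ∀ t ∈ II, 0 < u t → U' t ^ 2 ≤ 4*L*(u t) := fun t ht h =>
    landau u U' L hL0 hud huLip hzero h0 h1 ht h
  have hLanNeg : ∀ t ∈ II, 0 < -(u t) → (-(U' t)) ^ 2 ≤ 4*L*(-(u t)) := by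
    intro t ht h
    exact landau (fun s => -(u s)) (fun s => -(U' s)) L hL0
      (fun s hs => (hud s hs).neg)
      (fun s hs t' ht' => by
        rw [show -(U' s) - -(U' t') = -(U' s - U' t') by ring, abs_neg]
        exact huLip s hs t' ht')
      (fun s hs hh => by
        rw [neg_eq_zero] at hh ⊢
        exact hzero s hs hh)
      (by simp only [h0, neg_zero]) (by simp only [h1, neg_zero]) ht h
  set Cm := max (2 + 2*Real.sqrt L) (2 + 2*(Real.sqrt L/δ)) with hCmdef
  set D := Real.exp (L/δ) * Cm^2 with hDdef
  have hCm2 : (2:ℝ) ≤ Cm := le_trans (by nlinarith [Real.sqrt_nonneg L]) (le_max_left _ _)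
  have hexp1 : (1:ℝ) ≤ Real.exp (L/δ) := Real.one_le_exp (by positivity)
  have hD1 : (1:ℝ) ≤ D := by nlinarith
  refine ⟨D, hD1, ?_⟩
  intro n hn x hx
  have hn0 : (0:ℝ) < n := by exact_mod_cast hn
  have hn1' : (1:ℝ) ≤ (n:ℝ) := by exact_mod_cast hn
  have hnsq : (1:ℝ) ≤ (n:ℝ)^2 := by nlinarith
  have hDn1 : (1:ℝ) ≤ D * (n:ℝ)^2 := by nlinarith
  have hxkII : ∀ k, f^[k] x ∈ II := fun k => hf.mapsTo.iterate k hx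
  rcases lt_trichotomy (u x) 0 with hux | hux | hux
  · -- decreasing orbit
    have hposk : ∀ k, u (f^[k] x) < 0 := by
      intro k
      induction k with
      | zero => simpa using hux
      | succ k ih =>
        rw [Function.iterate_succ_apply']
        have hy := hxkII k
        have hfy := hf.mapsTo hy
        have hlt : f (f^[k] x) < f^[k] x := by
          have : u (f^[k] x) < 0 := ih
          simp only [hudef] at this
          linarith
        have := hmono hfy hy hlt
        simp only [hudef]
        linarith
    set ℓ : ℕ → ℝ := fun k => -(u (f^[k] x)) with hℓdef
    have hℓpos : ∀ k, 0 < ℓ k := fun k => by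
      simp only [hℓdef]; linarith [hposk k]
    have hstep : ∀ k, f^[k+1] x = f^[k] x - ℓ k := by
      intro k
      rw [Function.iterate_succ_apply']
      simp only [hℓdef, hudef]
      ring
    have hℓ1 : ∀ k, ℓ k ≤ 1 := by
      intro k
      have h1 := (hxkII k).2
      have h2 := (hxkII (k+1)).1
      have := hstep k
      linarith
    have hsum : ∀ m : ℕ, ∑ k ∈ Finset.range m, ℓ k ≤ 1 := by
      intro m
      have : ∑ k ∈ Finset.range m, ℓ k = x - f^[m] x := by
        induction m with
        | zero => simp
        | succ m ih =>
          rw [Finset.sum_range_succ, ih, hstep m]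
          ring
      rw [this]
      linarith [(hxkII m).1, hx.2]
    have hmvt : ∀ k, ∃ e, e ∈ II ∧ |f^[k] x - e| ≤ ℓ k ∧ ℓ (k+1) = F' e * ℓ k := by
      intro k
      have hab : f^[k+1] x < f^[k] x := by
        have := hstep k; have := hℓpos k; linarith
      have haII := hxkII (k+1)
      have hbII := hxkII k
      have hsub : Icc (f^[k+1] x) (f^[k] x) ⊆ II := Icc_subset_Icc haII.1 hbII.2
      obtain ⟨e, he, hslope⟩ := exists_hasDerivAt_eq_slope f F' hab
        (hf.contDiffOn.continuousOn.mono hsub)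
        (fun c hc => (hFd c (hsub (Ioo_subset_Icc_self hc))).hasDerivAt
          (Icc_mem_nhds (lt_of_le_of_lt haII.1 hc.1) (lt_of_lt_of_le hc.2 hbII.2)))
      have heII : e ∈ II := hsub (Ioo_subset_Icc_self he)
      refine ⟨e, heII, ?_, ?_⟩
      · rw [abs_of_nonneg (by linarith [he.2])]
        have := hstep k
        linarith [he.1]
      · have hfa : f (f^[k] x) = f^[k+1] x := (Function.iterate_succ_apply' f k x).symm
        have hfb : f (f^[k+1] x) = f^[k+2] x := (Function.iterate_succ_apply' f (k+1) x).symm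
        have hnum : f (f^[k] x) - f (f^[k+1] x) = ℓ (k+1) := by
          rw [hfa, hfb]
          have := hstep (k+1)
          linarith
        have hden : f^[k] x - f^[k+1] x = ℓ k := by
          have := hstep k; linarith
        rw [hnum, hden] at hslope
        rw [eq_div_iff (hℓpos k).ne'] at hslope
        exact hslope.symm
    choose η hηII hηdist hηmvt using hmvt
    have hvlip : ∀ k, |Real.sqrt (ℓ (k+1)) - Real.sqrt (ℓ k)| ≤ Real.sqrt L * ℓ k := by
      intro k
      have hab : f^[k+1] x < f^[k] x := by
        have := hstep k; have := hℓpos k; linarith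
      have haII := hxkII (k+1)
      have hbII := hxkII k
      have hsub : Icc (f^[k+1] x) (f^[k] x) ⊆ II := Icc_subset_Icc haII.1 hbII.2
      have hpos : ∀ s ∈ Icc (f^[k+1] x) (f^[k] x), 0 < -(u s) := by
        intro s hs
        by_contra hns
        push_neg at hns
        have hsII : s ∈ II := hsub hs
        have hsa : s < f^[k] x := lt_of_le_of_ne hs.2 (fun he => by
          rw [he] at hns; linarith [hposk k])
        have h2 : f s < f (f^[k] x) := hmono hsII hbII hsa
        have h3 : s ≤ f s := by simp only [hudef] at hns; linarith
        have h4 : f (f^[k] x) = f^[k+1] x := (Function.iterate_succ_apply' f k x).symm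
        linarith [hs.1]
      have := sqrt_lip (fun s => -(u s)) (fun s => -(U' s)) L hL0
        (fun s hs => (hud s hs).neg)
        (fun t' ht' h' => hLanNeg t' ht' h')
        haII hbII hab.le hpos
      have heq : f^[k] x - f^[k+1] x = ℓ k := by
        have := hstep k; linarith
      rw [heq] at this
      rw [abs_sub_comm]
      simp only [hℓdef] at this ⊢
      exact this
    exact orbit_prod_bound F' δ L hδ hL0 hδle hLipF (fun k => f^[k] x) hxkII ℓ hℓpos hℓ1
      hsum η hηII hηdist hηmvt hvlip n hn
  · -- fixed point
    have hfxx : f x = x := by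
      have : f x - x = 0 := hux
      linarith
    have hall : ∀ k ∈ Finset.range n, F' (f^[k] x) = 1 := by
      intro k _
      rw [Function.iterate_fixed hfxx]
      exact hfix x hx hfxx
    rw [Finset.prod_congr rfl hall, Finset.prod_const_one]
    constructor
    · exact inv_le_one_of_one_le₀ hDn1
    · exact hDn1
  · -- increasing orbit
    have hposk : ∀ k, 0 < u (f^[k] x) := by
      intro k
      induction k with
      | zero => simpa using hux
      | succ k ih =>
        rw [Function.iterate_succ_apply']
        have hy := hxkII k
        have hfy := hf.mapsTo hy
        have hlt : f^[k] x < f (f^[k] x) := by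
          simp only [hudef] at ih
          linarith
        have := hmono hy hfy hlt
        simp only [hudef]
        linarith
    set ℓ : ℕ → ℝ := fun k => u (f^[k] x) with hℓdef
    have hℓpos : ∀ k, 0 < ℓ k := fun k => hposk k
    have hstep : ∀ k, f^[k+1] x = f^[k] x + ℓ k := by
      intro k
      rw [Function.iterate_succ_apply']
      simp only [hℓdef, hudef]
      ring
    have hℓ1 : ∀ k, ℓ k ≤ 1 := by
      intro k
      have h1 := (hxkII k).1
      have h2 := (hxkII (k+1)).2
      have := hstep k
      linarith
    have hsum : ∀ m : ℕ, ∑ k ∈ Finset.range m, ℓ k ≤ 1 := by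
      intro m
      have : ∑ k ∈ Finset.range m, ℓ k = f^[m] x - x := by
        induction m with
        | zero => simp
        | succ m ih =>
          rw [Finset.sum_range_succ, ih, hstep m]
          ring
      rw [this]
      linarith [(hxkII m).2, hx.1]
    have hmvt : ∀ k, ∃ e, e ∈ II ∧ |f^[k] x - e| ≤ ℓ k ∧ ℓ (k+1) = F' e * ℓ k := by
      intro k
      have hab : f^[k] x < f^[k+1] x := by
        have := hstep k; have := hℓpos k; linarith
      have haII := hxkII k
      have hbII := hxkII (k+1)
      have hsub : Icc (f^[k] x) (f^[k+1] x) ⊆ II := Icc_subset_Icc haII.1 hbII.2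
      obtain ⟨e, he, hslope⟩ := exists_hasDerivAt_eq_slope f F' hab
        (hf.contDiffOn.continuousOn.mono hsub)
        (fun c hc => (hFd c (hsub (Ioo_subset_Icc_self hc))).hasDerivAt
          (Icc_mem_nhds (lt_of_le_of_lt haII.1 hc.1) (lt_of_lt_of_le hc.2 hbII.2)))
      have heII : e ∈ II := hsub (Ioo_subset_Icc_self he)
      refine ⟨e, heII, ?_, ?_⟩
      · rw [abs_sub_comm, abs_of_nonneg (by linarith [he.1])]
        have := hstep k
        linarith [he.2]
      · have hfa : f (f^[k] x) = f^[k+1] x := (Function.iterate_succ_apply' f k x).symm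
        have hfb : f (f^[k+1] x) = f^[k+2] x := (Function.iterate_succ_apply' f (k+1) x).symm
        have hnum : f (f^[k+1] x) - f (f^[k] x) = ℓ (k+1) := by
          rw [hfa, hfb]
          have := hstep (k+1)
          linarith
        have hden : f^[k+1] x - f^[k] x = ℓ k := by
          have := hstep k; linarith
        rw [hnum, hden] at hslope
        rw [eq_div_iff (hℓpos k).ne'] at hslope
        exact hslope.symm
    choose η hηII hηdist hηmvt using hmvt
    have hvlip : ∀ k, |Real.sqrt (ℓ (k+1)) - Real.sqrt (ℓ k)| ≤ Real.sqrt L * ℓ k := by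
      intro k
      have hab : f^[k] x < f^[k+1] x := by
        have := hstep k; have := hℓpos k; linarith
      have haII := hxkII k
      have hbII := hxkII (k+1)
      have hsub : Icc (f^[k] x) (f^[k+1] x) ⊆ II := Icc_subset_Icc haII.1 hbII.2
      have hpos : ∀ s ∈ Icc (f^[k] x) (f^[k+1] x), 0 < u s := by
        intro s hs
        by_contra hns
        push_neg at hns
        have hsII : s ∈ II := hsub hs
        have hsa : f^[k] x < s := lt_of_le_of_ne hs.1 (fun he => by
          rw [← he] at hns; linarith [hposk k])
        have h2 : f (f^[k] x) < f s := hmono haII hsII hsa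
        have h3 : f s ≤ s := by simp only [hudef] at hns; linarith
        have h4 : f (f^[k] x) = f^[k+1] x := (Function.iterate_succ_apply' f k x).symm
        linarith [hs.2]
      have := sqrt_lip u U' L hL0 hud
        (fun t' ht' h' => hLanPos t' ht' h')
        haII hbII hab.le hpos
      have heq : f^[k+1] x - f^[k] x = ℓ k := by
        have := hstep k; linarith
      rw [heq] at this
      exact this
    exact orbit_prod_bound F' δ L hδ hL0 hδle hLipF (fun k => f^[k] x) hxkII ℓ hℓpos hℓ1
      hsum η hηII hηdist hηmvt hvlip n hn

/-- **Theorem 2 (Polterovich–Sodin).** If `f ∈ Diff₀[0,1]` is `C²`-smooth and `γ(f) = 1`,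
then `Γ_n(f) ≤ C(f) · n²` for all `n ∈ ℕ`. -/
theorem growth_gap_C2 (f g : ℝ → ℝ) (hf : IsDiff01 f g)
    (hC2 : ContDiffOn ℝ 2 f (Set.Icc (0:ℝ) 1))
    (hγ : GammaEqOne f g) :
    ∃ C > 0, ∀ n : ℕ, 1 ≤ n → Gamma f g n ≤ C * (n:ℝ) ^ 2 := by
  have hfix : ∀ p ∈ II, f p = p → derivWithin f II p = 1 := fixed_deriv_one f g hf hγ
  obtain ⟨D, hD1, hcore⟩ := core_prod f g hf hC2 hfix
  refine ⟨D, by linarith, ?_⟩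
  intro n hn
  have hn0 : (0:ℝ) < n := by exact_mod_cast hn
  have hDn0 : (0:ℝ) < D * (n:ℝ)^2 := by nlinarith
  have hFd : ∀ t ∈ II, HasDerivWithinAt f (derivWithin f II t) II t := fun t ht =>
    (hf.contDiffOn.differentiableOn one_ne_zero t ht).hasDerivWithinAt
  have hGd : ∀ t ∈ II, HasDerivWithinAt g (derivWithin g II t) II t := fun t ht =>
    (hf.inv_contDiffOn.differentiableOn one_ne_zero t ht).hasDerivWithinAt
  have hfpart : supAbsDeriv (f^[n]) ≤ D * (n:ℝ)^2 := by
    apply Real.sSup_le _ hDn0.le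
    rintro w ⟨x, hx, rfl⟩
    show |derivWithin (f^[n]) II x| ≤ D * (n:ℝ)^2
    have hd := (iter_hasDeriv f _ hf.mapsTo hFd n x hx).derivWithin (uD x hx)
    rw [hd]
    have hPpos : 0 < ∏ k ∈ Finset.range n, derivWithin f II (f^[k] x) :=
      Finset.prod_pos (fun k _ => hf.deriv_pos _ (hf.mapsTo.iterate k hx))
    rw [abs_of_pos hPpos]
    exact (hcore n hn x hx).2
  have hgpart : supAbsDeriv (g^[n]) ≤ D * (n:ℝ)^2 := by
    apply Real.sSup_le _ hDn0.le
    rintro w ⟨y, hy, rfl⟩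
    show |derivWithin (g^[n]) II y| ≤ D * (n:ℝ)^2
    have hykII : ∀ k, g^[k] y ∈ II := fun k => hf.inv_mapsTo.iterate k hy
    have hG' : ∀ z ∈ II, derivWithin g II z = (derivWithin f II (g z))⁻¹ := by
      intro z hz
      have h := inv_deriv_rel f g hf hz
      have hpos : 0 < derivWithin f II (g z) := hf.deriv_pos _ (hf.inv_mapsTo hz)
      rw [inv_eq_one_div, eq_div_iff hpos.ne']
      rw [mul_comm]
      exact h
    have hd := (iter_hasDeriv g _ hf.inv_mapsTo hGd n y hy).derivWithin (uD y hy)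
    rw [hd]
    set x0 := g^[n] y with hx0
    have hx0II : x0 ∈ II := hykII n
    have hswap : ∀ j, j ≤ n → f^[j] x0 = g^[n - j] y := by
      intro j
      induction j with
      | zero => intro _; simp [hx0]
      | succ j ih =>
        intro hj
        rw [Function.iterate_succ_apply', ih (by omega)]
        have h1 : n - j = (n - (j+1)) + 1 := by omega
        rw [h1, Function.iterate_succ_apply']
        exact hf.right_inv _ (hykII (n - (j+1)))
    have e1 : ∏ k ∈ Finset.range n, derivWithin g II (g^[k] y)
        = ∏ k ∈ Finset.range n, (derivWithin f II (g^[k+1] y))⁻¹ := by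
      apply Finset.prod_congr rfl
      intro k _
      rw [hG' _ (hykII k), ← Function.iterate_succ_apply' g k y]
    have e2 : ∏ k ∈ Finset.range n, (derivWithin f II (g^[k+1] y))⁻¹
        = (∏ k ∈ Finset.range n, derivWithin f II (g^[k+1] y))⁻¹ := by
      rw [← Finset.prod_inv_distrib]
    have e3 : ∏ k ∈ Finset.range n, derivWithin f II (g^[k+1] y)
        = ∏ k ∈ Finset.range n, derivWithin f II (f^[k] x0) := by
      rw [← Finset.prod_range_reflect]
      apply Finset.prod_congr rfl
      intro k hk
      rw [Finset.mem_range] at hk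
      have h1 : n - 1 - k + 1 = n - k := by omega
      rw [h1, hswap k (by omega)]
    rw [e1, e2, e3]
    have hlow := (hcore n hn x0 hx0II).1
    have hPpos : 0 < ∏ k ∈ Finset.range n, derivWithin f II (f^[k] x0) :=
      Finset.prod_pos (fun k _ => hf.deriv_pos _ (hf.mapsTo.iterate k hx0II))
    rw [abs_of_pos (inv_pos.mpr hPpos)]
    calc (∏ k ∈ Finset.range n, derivWithin f II (f^[k] x0))⁻¹
        ≤ ((D * (n:ℝ)^2)⁻¹)⁻¹ := inv_anti₀ (inv_pos.mpr hDn0) hlow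
      _ = D * (n:ℝ)^2 := inv_inv _
  simp only [Gamma]
  exact max_le hfpart hgpart
end

section
/- Let ω : [0,1] → [0,∞) be a strictly increasing modulus of continuity, and let ω^{-1} denote its inverse function. Then for every f ∈ Diff₀^ω[0,1] with γ(f) = 1 there exists a constant C(f) > 0 such that for all n ∈ ℕ with 2/n ≤ ω(1) one has log Γ_n(f) ≤ log( n / ω^{-1}(2/n) ) + C(f) · n · ω(1/n). -/
open Set Filter

local notation "𝕀" => Set.Icc (0:ℝ) 1

lemma IsModCont.mono' {ω : ℝ → ℝ} (hω : IsModCont ω) {a b : ℝ} (ha : 0 ≤ a)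
    (hab : a ≤ b) (hb : b ≤ 1) : ω a ≤ ω b :=
  hω.monotoneOn ⟨ha, hab.trans hb⟩ ⟨ha.trans hab, hb⟩ hab

lemma IsModCont.nonneg' {ω : ℝ → ℝ} (hω : IsModCont ω) {a : ℝ} (ha : 0 ≤ a) (ha1 : a ≤ 1) :
    0 ≤ ω a := hω.nonneg a ⟨ha, ha1⟩

lemma IsModCont.nat_mul {ω : ℝ → ℝ} (hω : IsModCont ω) (k : ℕ) {t : ℝ} (ht : 0 ≤ t)
    (h : (k:ℝ) * t ≤ 1) : ω ((k:ℝ) * t) ≤ (k:ℝ) * ω t := by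
  induction k with
  | zero => simp [hω.map_zero]
  | succ k ih =>
    have hk : (k:ℝ) * t ≤ 1 := by
      have : (k:ℝ) * t ≤ ((k:ℝ)+1) * t := by nlinarith
      calc (k:ℝ) * t ≤ ((k:ℝ)+1)*t := this
        _ = ((k+1:ℕ):ℝ) * t := by push_cast; ring
        _ ≤ 1 := h
    have h1 : ((k+1:ℕ):ℝ) * t = (k:ℝ)*t + t := by push_cast; ring
    rw [h1]
    have h2 := hω.subadd ((k:ℝ)*t) t (by positivity) ht (by rw [← h1]; exact h)
    have h3 := ih hk
    push_cast
    linarith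

lemma IsModCont.le_mul {ω : ℝ → ℝ} (hω : IsModCont ω) {s : ℝ} (hs0 : 0 ≤ s) (hs1 : s ≤ 1)
    {n : ℕ} (hn : 1 ≤ n) : ω s ≤ ((n:ℝ) * s + 1) * ω (1/(n:ℝ)) := by
  have hn0 : (0:ℝ) < n := by exact_mod_cast hn
  set k : ℕ := ⌈s * n⌉₊ with hk
  have hkn : k ≤ n := Nat.ceil_le.2 (by nlinarith)
  have hsk : s ≤ (k:ℝ) * (1/(n:ℝ)) := by
    rw [mul_one_div, le_div_iff₀ hn0]
    exact Nat.le_ceil _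
  have hk1 : (k:ℝ) * (1/(n:ℝ)) ≤ 1 := by
    rw [mul_one_div, div_le_one hn0]; exact_mod_cast hkn
  have h1 : ω s ≤ ω ((k:ℝ) * (1/(n:ℝ))) := hω.mono' hs0 hsk hk1
  have h2 : ω ((k:ℝ) * (1/(n:ℝ))) ≤ (k:ℝ) * ω (1/(n:ℝ)) :=
    hω.nat_mul k (by positivity) hk1
  have hkle : (k:ℝ) ≤ (n:ℝ) * s + 1 := by
    have := Nat.ceil_lt_add_one (by positivity : (0:ℝ) ≤ s * n)
    have : (k:ℝ) < s * n + 1 := this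
    nlinarith
  have hω0 : 0 ≤ ω (1/(n:ℝ)) := hω.nonneg' (by positivity) (by
    rw [div_le_one hn0]; exact_mod_cast hn)
  nlinarith [h1, h2]

lemma IsModCont.scale {ω : ℝ → ℝ} (hω : IsModCont ω) (N : ℕ) (hN : 1 ≤ N) {a b : ℝ}
    (ha : 0 ≤ a) (ha1 : a ≤ 1) (hb : 0 ≤ b) (hb1 : b ≤ 1) (hab : a ≤ (N:ℝ) * b) :
    ω a ≤ (N:ℝ) * ω b := by
  have hN0 : (0:ℝ) < N := by exact_mod_cast hN
  by_cases h : (N:ℝ) * b ≤ 1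
  · calc ω a ≤ ω ((N:ℝ)*b) := hω.mono' ha hab h
      _ ≤ (N:ℝ) * ω b := hω.nat_mul N hb h
  · push_neg at h
    have h1N : (0:ℝ) < 1/(N:ℝ) := by positivity
    have hbN : 1/(N:ℝ) ≤ b := by
      rw [div_le_iff₀ hN0]; nlinarith
    have h2 : ω 1 ≤ (N:ℝ) * ω (1/(N:ℝ)) := by
      have := hω.nat_mul N (le_of_lt h1N) (by field_simp; exact le_rfl)
      have hNN : (N:ℝ) * (1/(N:ℝ)) = 1 := by field_simp
      rw [hNN] at this; exact this
    calc ω a ≤ ω 1 := hω.mono' ha ha1 le_rfl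
      _ ≤ (N:ℝ) * ω (1/(N:ℝ)) := h2
      _ ≤ (N:ℝ) * ω b := by
          have := hω.mono' (le_of_lt h1N) hbN hb1
          nlinarith

lemma iter_contDiffOn_s3 {f : ℝ → ℝ} (hmaps : Set.MapsTo f 𝕀 𝕀) (hcd : ContDiffOn ℝ 1 f 𝕀)
    (n : ℕ) : ContDiffOn ℝ 1 (f^[n]) 𝕀 := by
  induction n with
  | zero => simpa using contDiffOn_id
  | succ n ih =>
    rw [Function.iterate_succ]
    exact ih.comp hcd hmaps

lemma iter_deriv_prod {f : ℝ → ℝ} (hmaps : Set.MapsTo f 𝕀 𝕀) (hcd : ContDiffOn ℝ 1 f 𝕀)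
    (n : ℕ) {x : ℝ} (hx : x ∈ 𝕀) :
    derivWithin (f^[n]) 𝕀 x = ∏ k ∈ Finset.range n, derivWithin f 𝕀 (f^[k] x) := by
  have hI : UniqueDiffOn ℝ 𝕀 := uniqueDiffOn_Icc one_pos
  induction n with
  | zero => simpa using derivWithin_id x 𝕀 (hI x hx)
  | succ n ih =>
    rw [Function.iterate_succ']
    have hdf : DifferentiableOn ℝ f 𝕀 := hcd.differentiableOn one_ne_zero
    have hdfn : DifferentiableOn ℝ (f^[n]) 𝕀 :=
      (iter_contDiffOn_s3 hmaps hcd n).differentiableOn one_ne_zero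
    rw [derivWithin_comp x (hdf _ ((hmaps.iterate n) hx)) (hdfn x hx)
      (hmaps.iterate n), ih, Finset.prod_range_succ, mul_comm]


lemma inv_deriv {f g : ℝ → ℝ} (hf : IsDiff01 f g) {u : ℝ} (hu : u ∈ 𝕀) :
    derivWithin f 𝕀 (g u) * derivWithin g 𝕀 u = 1 := by
  have hI : UniqueDiffOn ℝ 𝕀 := uniqueDiffOn_Icc one_pos
  have hdf : DifferentiableOn ℝ f 𝕀 := hf.contDiffOn.differentiableOn one_ne_zero
  have hdg : DifferentiableOn ℝ g 𝕀 := hf.inv_contDiffOn.differentiableOn one_ne_zero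
  have h1 : derivWithin (f ∘ g) 𝕀 u = derivWithin f 𝕀 (g u) * derivWithin g 𝕀 u :=
    derivWithin_comp u (hdf _ (hf.inv_mapsTo hu)) (hdg u hu) hf.inv_mapsTo
  have h2 : derivWithin (f ∘ g) 𝕀 u = derivWithin id 𝕀 u := by
    apply derivWithin_congr
    · intro y hy; exact hf.right_inv y hy
    · exact hf.right_inv u hu
  rw [← h1, h2, derivWithin_id u 𝕀 (hI u hu)]

/-- boundedness of the |derivative| image, for `le_csSup` -/
lemma bdd_im {f : ℝ → ℝ} (hmaps : Set.MapsTo f 𝕀 𝕀) (hcd : ContDiffOn ℝ 1 f 𝕀) (n : ℕ) :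
    BddAbove ((fun x => |derivWithin (f^[n]) (Set.Icc (0:ℝ) 1) x|) '' Set.Icc (0:ℝ) 1) := by
  have hI : UniqueDiffOn ℝ 𝕀 := uniqueDiffOn_Icc one_pos
  have hc : ContinuousOn (fun x => |derivWithin (f^[n]) 𝕀 x|) 𝕀 :=
    ((iter_contDiffOn_s3 hmaps hcd n).continuousOn_derivWithin hI le_rfl).abs
  exact (isCompact_Icc.image_of_continuousOn hc).bddAbove

lemma le_supAbsDeriv {f : ℝ → ℝ} (hmaps : Set.MapsTo f 𝕀 𝕀) (hcd : ContDiffOn ℝ 1 f 𝕀)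
    (n : ℕ) {x : ℝ} (hx : x ∈ 𝕀) :
    |derivWithin (f^[n]) 𝕀 x| ≤ supAbsDeriv (f^[n]) :=
  le_csSup (bdd_im hmaps hcd n) (Set.mem_image_of_mem _ hx)

lemma fix_deriv_one {f g : ℝ → ℝ} (hf : IsDiff01 f g) (hγ : GammaEqOne f g) :
    ∀ p ∈ 𝕀, f p = p → derivWithin f 𝕀 p = 1 := by
  intro p hp hfp
  set lam := derivWithin f 𝕀 p with hlam
  have hlam_pos : 0 < lam := hf.deriv_pos p hp
  have hgp : g p = p := by conv_lhs => rw [← hfp]; rw [hf.left_inv p hp]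
  have hpsi : lam * derivWithin g 𝕀 p = 1 := by
    have := inv_deriv hf hp
    rwa [hgp] at this
  have hpsi' : derivWithin g 𝕀 p = lam⁻¹ := by
    field_simp at hpsi ⊢; linarith
  -- Gamma bounds
  have hGf : ∀ n : ℕ, lam ^ n ≤ Gamma f g n := by
    intro n
    have h1 : derivWithin (f^[n]) 𝕀 p = lam ^ n := by
      rw [iter_deriv_prod hf.mapsTo hf.contDiffOn n hp]
      rw [Finset.prod_congr rfl (fun k _ => by rw [Function.iterate_fixed hfp k])]
      simp [hlam]
    have h2 : lam ^ n ≤ supAbsDeriv (f^[n]) := by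
      have := le_supAbsDeriv hf.mapsTo hf.contDiffOn n hp
      rw [h1, abs_of_pos (pow_pos hlam_pos n)] at this; exact this
    exact h2.trans (le_max_left _ _)
  have hGg : ∀ n : ℕ, (lam⁻¹) ^ n ≤ Gamma f g n := by
    intro n
    have h1 : derivWithin (g^[n]) 𝕀 p = (lam⁻¹) ^ n := by
      rw [iter_deriv_prod hf.inv_mapsTo hf.inv_contDiffOn n hp]
      rw [Finset.prod_congr rfl (fun k _ => by rw [Function.iterate_fixed hgp k])]
      simp [hpsi']
    have h2 : (lam⁻¹) ^ n ≤ supAbsDeriv (g^[n]) := by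
      have := le_supAbsDeriv hf.inv_mapsTo hf.inv_contDiffOn n hp
      rw [h1, abs_of_pos (pow_pos (inv_pos.2 hlam_pos) n)] at this; exact this
    exact h2.trans (le_max_right _ _)
  set mu := max lam lam⁻¹ with hmu
  have hmu_pos : 0 < mu := lt_max_of_lt_left hlam_pos
  have hmuG : ∀ n : ℕ, mu ^ n ≤ Gamma f g n := by
    intro n
    rcases max_cases lam lam⁻¹ with ⟨h, _⟩ | ⟨h, _⟩
    · rw [hmu, h]; exact hGf n
    · rw [hmu, h]; exact hGg n
  have hmule : mu ≤ 1 := by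
    apply ge_of_tendsto hγ
    filter_upwards [eventually_ge_atTop 1] with n hn
    have hn0 : ((n:ℝ)) ≠ 0 := by positivity
    have h1 : mu ^ n ≤ Gamma f g n := hmuG n
    have h2 : (mu ^ n) ^ (1/(n:ℝ)) ≤ (Gamma f g n) ^ (1/(n:ℝ)) :=
      Real.rpow_le_rpow (by positivity) h1 (by positivity)
    have h3 : (mu ^ n : ℝ) ^ (1/(n:ℝ)) = mu := by
      rw [← Real.rpow_natCast mu n, ← Real.rpow_mul (le_of_lt hmu_pos)]
      rw [mul_one_div, div_self hn0, Real.rpow_one]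
    rwa [h3] at h2
  have h4 : lam ≤ 1 := le_trans (le_max_left _ _) hmule
  have h5 : lam⁻¹ ≤ 1 := le_trans (le_max_right _ _) hmule
  have h6 : 1 ≤ lam := by
    by_contra h
    push_neg at h
    have : 1 < lam⁻¹ := by
      rw [lt_inv_comm₀ one_pos hlam_pos] at *
      · simpa using h
    linarith
  linarith


set_option maxHeartbeats 2000000 in
lemma pointwise_incr (ω f : ℝ → ℝ) (hω : IsModCont ω)
    (C₀ m : ℝ) (hC₀ : 0 < C₀) (hm0 : 0 < m) (hm1 : m ≤ 1)
    (hf0 : f 0 = 0)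
    (hmaps : Set.MapsTo f 𝕀 𝕀) (hcd : ContDiffOn ℝ 1 f 𝕀)
    (hφm : ∀ y ∈ 𝕀, m ≤ derivWithin f 𝕀 y)
    (hmod : ∀ u ∈ 𝕀, ∀ v ∈ 𝕀, |derivWithin f 𝕀 u - derivWithin f 𝕀 v| ≤ C₀ * ω |u - v|)
    (hfix : ∀ p ∈ 𝕀, f p = p → derivWithin f 𝕀 p = 1)
    (n : ℕ) (hn : 1 ≤ n) (δ : ℝ) (hδ0 : 0 < δ) (h3δ : 3*δ ≤ 1) (hωδ : ω δ = 2/(n:ℝ))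
    (x : ℝ) (hx : x ∈ 𝕀) (hxf : x < f x) :
    ∏ k ∈ Finset.range n, derivWithin f 𝕀 (f^[k] x)
      ≤ ((n:ℝ)/δ) * Real.exp ((6*C₀+2) + (2*C₀/m)*((n:ℝ)*ω (1/(n:ℝ)))) := by
  classical
  have hI : UniqueDiffOn ℝ 𝕀 := uniqueDiffOn_Icc one_pos
  set φ : ℝ → ℝ := derivWithin f 𝕀 with hφdef
  have hdf : DifferentiableOn ℝ f 𝕀 := hcd.differentiableOn one_ne_zero
  have hcf : ContinuousOn f 𝕀 := hcd.continuousOn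
  have hφpos : ∀ y ∈ 𝕀, 0 < φ y := fun y hy => lt_of_lt_of_le hm0 (hφm y hy)
  have hn0 : (0:ℝ) < n := by exact_mod_cast hn
  have hδ1 : δ ≤ 1 := by linarith
  have hωδ_pos : 0 < ω δ := by rw [hωδ]; positivity
  have hω1n : 0 ≤ ω (1/(n:ℝ)) := hω.nonneg' (by positivity) (by
    rw [div_le_one hn0]; exact_mod_cast hn)
  set X : ℕ → ℝ := fun k => f^[k] x with hX
  have hXI : ∀ k, X k ∈ 𝕀 := fun k => (hmaps.iterate k) hx
  have hX0 : X 0 = x := rfl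
  have hXsucc' : ∀ k, X (k+1) = f (X k) := fun k => Function.iterate_succ_apply' f k x
  -- derivative facts
  have hDA : ∀ z ∈ Ioo (0:ℝ) 1, HasDerivAt f (φ z) z := by
    intro z hz
    exact (hdf z (Ioo_subset_Icc_self hz)).hasDerivWithinAt.hasDerivAt
      (Icc_mem_nhds hz.1 hz.2)
  have hsmf : StrictMonoOn f 𝕀 := by
    apply strictMonoOn_of_deriv_pos (convex_Icc 0 1) hcf
    intro z hz
    rw [interior_Icc] at hz
    rw [← derivWithin_of_mem_nhds (Icc_mem_nhds hz.1 hz.2)]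
    exact hφpos z (Ioo_subset_Icc_self hz)
  have hXlt : ∀ k, X k < X (k+1) := by
    intro k
    induction k with
    | zero => rw [hXsucc' 0, hX0]; exact hxf
    | succ k ih =>
      have h2 : f (X k) < f (X (k+1)) := hsmf (hXI k) (hXI (k+1)) ih
      rw [← hXsucc' k, ← hXsucc' (k+1)] at h2
      exact h2
  have hXmono : StrictMono X := strictMono_nat_of_lt_succ hXlt
  set s : ℕ → ℝ := fun k => X (k+1) - X k with hs
  -- the fixed point p below x
  have hFsclosed : IsClosed ((𝕀 ∩ Iic x) ∩ (fun y => f y - y) ⁻¹' {0}) :=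
    ContinuousOn.preimage_isClosed_of_isClosed
      ((hcf.mono inter_subset_left).sub continuousOn_id)
      (isClosed_Icc.inter isClosed_Iic) isClosed_singleton
  set Fs : Set ℝ := (𝕀 ∩ Iic x) ∩ (fun y => f y - y) ⁻¹' {0} with hFs
  have hFs0 : (0:ℝ) ∈ Fs := by
    constructor
    · exact ⟨left_mem_Icc.2 zero_le_one, hx.1⟩
    · simp [hf0]
  have hFscomp : IsCompact Fs := isCompact_Icc.of_isClosed_subset hFsclosed
    (fun y hy => hy.1.1)
  set p : ℝ := sSup Fs with hp
  have hpF : p ∈ Fs := hFscomp.sSup_mem ⟨0, hFs0⟩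
  have hpI : p ∈ 𝕀 := hpF.1.1
  have hpfix : f p = p := by have := hpF.2; simp at this; linarith
  have hple : p ≤ x := hpF.1.2
  have hplt : p < x := by
    rcases lt_or_eq_of_le hple with h | h
    · exact h
    · exfalso; rw [h] at hpfix; rw [hpfix] at hxf; exact lt_irrefl _ hxf
  have hφp : φ p = 1 := hfix p hpI hpfix
  have hnofix : ∀ y, p < y → y ≤ x → f y ≠ y := by
    intro y h1 h2 h
    have hyF : y ∈ Fs := ⟨⟨⟨le_trans hpI.1 h1.le, h2.trans hx.2⟩, h2⟩, by simp [h]⟩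
    exact absurd (le_csSup hFscomp.bddAbove hyF) (not_le.2 h1)
    -- positivity of displacement along the relevant range
  have hDpos : ∀ y, p < y → y ≤ X n → y < f y := by
    intro y h1 h2
    by_contra hcon
    push_neg at hcon   -- f y ≤ y
    have hyI : y ∈ 𝕀 := ⟨le_trans hpI.1 h1.le, h2.trans (hXI n).2⟩
    rcases le_or_gt y x with hyx | hxy
    · -- y ≤ x
      rcases eq_or_lt_of_le hcon with heq | hlt
      · exact hnofix y h1 hyx heq
      · have hylt : y < x := by
          rcases eq_or_lt_of_le hyx with rfl | h
          · exact absurd hlt (not_lt.2 hxf.le)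
          · exact h
        have hcont : ContinuousOn (fun t => f t - t) (Icc y x) :=
          (hcf.mono (Icc_subset_Icc hyI.1 hx.2)).sub continuousOn_id
        have h0 : (0:ℝ) ∈ Ioo (f y - y) (f x - x) := ⟨by linarith, by linarith⟩
        obtain ⟨z, hz, hz0⟩ := intermediate_value_Ioo hylt.le hcont h0
        exact hnofix z (h1.trans hz.1) hz.2.le (by linarith [sub_eq_zero.1 hz0] ; )
    · -- x < y
      set P : ℕ → Prop := fun k => X k < y with hPdef
      have hP0 : P 0 := by rw [hPdef]; simpa [hX0] using hxy
      have hkP : P (Nat.findGreatest P n) := Nat.findGreatest_spec (Nat.zero_le n) hP0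
      set k₁ : ℕ := Nat.findGreatest P n with hk₁
      have hk₁n : k₁ ≤ n := Nat.findGreatest_le n
      have hk₁lt : k₁ < n := by
        rcases eq_or_lt_of_le hk₁n with heq | h
        · exfalso
          have : X n < y := by rw [← heq]; exact hkP
          linarith
        · exact h
      have hnext : ¬ P (k₁ + 1) :=
        Nat.findGreatest_is_greatest (Nat.lt_succ_self k₁) hk₁lt
      have hynext : y ≤ X (k₁+1) := not_lt.1 hnext
      have hky : X k₁ < y := hkP
      rcases eq_or_lt_of_le hcon with heq | hlt
      · -- f y = y
        have : f (X k₁) < f y := hsmf (hXI k₁) hyI hky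
        rw [heq, ← hXsucc' k₁] at this
        linarith
      · -- f y < y
        have hcont : ContinuousOn (fun t => f t - t) (Icc (X k₁) y) :=
          (hcf.mono (Icc_subset_Icc (hXI k₁).1 hyI.2)).sub continuousOn_id
        have hfk : 0 < f (X k₁) - X k₁ := by
          rw [← hXsucc' k₁]; linarith [hXlt k₁]
        have h0 : (0:ℝ) ∈ Ioo (f y - y) (f (X k₁) - X k₁) := ⟨by linarith, hfk⟩
        obtain ⟨z, hz, hz0⟩ := intermediate_value_Ioo' hky.le hcont h0
        have hzfix : f z = z := by have := sub_eq_zero.1 hz0; linarith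
        have : f (X k₁) < f z := hsmf (hXI k₁) ⟨le_trans (hXI k₁).1 hz.1.le, hz.2.le.trans hyI.2⟩ hz.1
        rw [hzfix, ← hXsucc' k₁] at this
        linarith [hz.2]
  have hXp : ∀ k, p < X k := fun k => hplt.trans_le (by
    rw [← hX0]; exact hXmono.monotone (Nat.zero_le k))
  have hs_pos : ∀ k, 0 < s k := fun k => sub_pos.2 (hXlt k)
  have hsum : ∀ a b : ℕ, a ≤ b → ∑ k ∈ Finset.Ico a b, s k = X b - X a := by
    intro a b hab
    rw [Finset.sum_Ico_eq_sub _ hab, Finset.sum_range_sub (fun k => X k),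
      Finset.sum_range_sub (fun k => X k)]
    ring
  have hsumr : ∀ b : ℕ, ∑ k ∈ Finset.range b, s k = X b - X 0 :=
    fun b => Finset.sum_range_sub (fun k => X k) b
  -- MVT producing a point with derivative equal to slope
  have hmvt : ∀ a b : ℝ, a < b → a ∈ 𝕀 → b ∈ 𝕀 →
      ∃ c ∈ Ioo a b, φ c = (f b - f a)/(b - a) := by
    intro a b hab ha hb
    exact exists_hasDerivAt_eq_slope f φ hab
      (hcf.mono (Icc_subset_Icc ha.1 hb.2))
      (fun z hz => hDA z ⟨lt_of_le_of_lt ha.1 hz.1, lt_of_lt_of_le hz.2 hb.2⟩)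
  -- the "dip" estimate
  have hβ : ∀ y, y ∈ 𝕀 → p + δ < y → y ≤ X n → φ y - 1 ≤ (f y - y)/δ + C₀ * ω δ := by
    intro y hyI h1 h2
    have ha0 : 0 ≤ y - δ := by
      have := hpI.1; linarith
    have haI : y - δ ∈ 𝕀 := ⟨ha0, by linarith [hyI.2]⟩
    obtain ⟨c, hc, hcval⟩ := hmvt (y - δ) y (by linarith) haI hyI
    have hcI : c ∈ 𝕀 := ⟨le_trans haI.1 hc.1.le, hc.2.le.trans hyI.2⟩
    have hfa : y - δ < f (y - δ) := hDpos (y - δ) (by linarith) (by linarith)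
    have hslope : f y - f (y - δ) = φ c * δ := by
      rw [hcval, show y - (y - δ) = δ by ring]; field_simp
    have hφc : φ y - C₀ * ω δ ≤ φ c := by
      have h := hmod y hyI c hcI
      have habs : |y - c| ≤ δ := by
        rw [abs_of_nonneg (by linarith [hc.2] : (0:ℝ) ≤ y - c)]
        linarith [hc.1]
      have hωm : ω |y - c| ≤ ω δ := hω.mono' (abs_nonneg _) habs hδ1
      have := abs_le.1 h
      nlinarith [this.1, this.2]
    have hgoal : φ y - 1 - C₀ * ω δ ≤ (f y - y)/δ := by
      rw [le_div_iff₀ hδ0]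
      nlinarith [hφc, hslope, hfa]
    linarith
    -- helpers for finishing
  have hn1 : (1:ℝ) ≤ (n:ℝ) := by exact_mod_cast hn
  have hnδ1 : (1:ℝ) ≤ (n:ℝ)/δ := by
    rw [le_div_iff₀ hδ0]; linarith
  have hEnonneg : 0 ≤ (2*C₀/m)*((n:ℝ)*ω (1/(n:ℝ))) := by positivity
  have hfinish : ∀ B : ℝ, B ≤ 6*C₀+2 →
      Real.exp B ≤ ((n:ℝ)/δ) * Real.exp ((6*C₀+2) + (2*C₀/m)*((n:ℝ)*ω (1/(n:ℝ)))) := by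
    intro B hB
    have h2 : Real.exp B ≤ Real.exp ((6*C₀+2) + (2*C₀/m)*((n:ℝ)*ω (1/(n:ℝ)))) :=
      Real.exp_le_exp.2 (by linarith)
    exact h2.trans (le_mul_of_one_le_left (Real.exp_pos _).le hnδ1)
  have hprodle : ∀ (j : ℕ) (c : ℝ), j ≤ n → 0 ≤ c →
      (∀ k, k < j → φ (X k) ≤ Real.exp (c/(n:ℝ))) →
      ∏ k ∈ Finset.range j, φ (X k) ≤ Real.exp c := by
    intro j c hj hc hk
    calc ∏ k ∈ Finset.range j, φ (X k)
        ≤ ∏ _k ∈ Finset.range j, Real.exp (c/(n:ℝ)) := by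
          apply Finset.prod_le_prod
          · exact fun k _ => (hφpos _ (hXI k)).le
          · exact fun k hkj => hk k (Finset.mem_range.1 hkj)
      _ = Real.exp ((j:ℝ) * (c/(n:ℝ))) := by
          rw [Finset.prod_const, Finset.card_range, ← Real.exp_nat_mul]
      _ ≤ Real.exp c := by
          apply Real.exp_le_exp.2
          have hjn : (j:ℝ) ≤ (n:ℝ) := by exact_mod_cast hj
          have : (j:ℝ) * (c/(n:ℝ)) ≤ (n:ℝ) * (c/(n:ℝ)) := by
            apply mul_le_mul_of_nonneg_right hjn (by positivity)
          rw [mul_div_cancel₀ c (ne_of_gt hn0)] at this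
          exact this
  have hω3δ : ω (3*δ) ≤ 6/(n:ℝ) := by
    have h3 : ((3:ℕ):ℝ) * δ ≤ 1 := by push_cast; linarith
    have := hω.nat_mul 3 hδ0.le h3
    push_cast at this
    rw [hωδ] at this
    calc ω (3*δ) ≤ 3 * (2/(n:ℝ)) := this
      _ = 6/(n:ℝ) := by ring
  have hXltn : ∀ k, k < n → X k ≤ X n := fun k hk => (hXmono.monotone hk.le)
  have hXgex : ∀ k, x ≤ X k := fun k => by
    rw [← hX0]; exact hXmono.monotone (Nat.zero_le k)
  -- MAIN CASE ANALYSIS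
  rcases le_or_gt (X n - X 0) δ with hT | hT
  · -- small movement
    rcases le_or_gt (x - p) (2*δ) with hxp | hxp
    · -- A1 : close to the fixed point all along
      refine le_trans (hprodle n (6*C₀) le_rfl (by positivity) ?_) (hfinish (6*C₀) (by linarith))
      intro k hk
      have h1 : φ (X k) - 1 ≤ C₀ * ω (X k - p) := by
        have h := (abs_le.1 (hmod (X k) (hXI k) p hpI)).2
        rw [hφp, abs_of_nonneg (by linarith [hXp k] : (0:ℝ) ≤ X k - p)] at h
        linarith
      have h2 : X k - p ≤ 3*δ := by
        have := hXltn k hk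
        have hTk : X k - X 0 ≤ δ := by linarith
        rw [hX0] at hTk
        linarith
      have h3 : ω (X k - p) ≤ ω (3*δ) := hω.mono' (by linarith [hXp k]) h2 h3δ
      have h4 : φ (X k) ≤ 1 + C₀ * (6/(n:ℝ)) := by nlinarith [hω3δ]
      have h5 : C₀ * (6/(n:ℝ)) = (6*C₀)/(n:ℝ) := by ring
      calc φ (X k) ≤ 1 + (6*C₀)/(n:ℝ) := by rw [← h5]; exact h4
        _ ≤ Real.exp ((6*C₀)/(n:ℝ)) := by linarith [Real.add_one_le_exp ((6*C₀)/(n:ℝ))]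
    · -- x is far from p
      have hβx : φ x - 1 ≤ (f x - x)/δ + C₀ * ω δ := by
        apply hβ x hx (by linarith)
        rw [← hX0]
        exact hXmono.monotone (Nat.zero_le n)
      have hterm : ∀ k, k < n → φ (X k) ≤ φ x + C₀ * ω δ := by
        intro k hk
        have h := (abs_le.1 (hmod (X k) (hXI k) x hx)).2
        have habs : |X k - x| ≤ δ := by
          rw [abs_of_nonneg (by linarith [hXgex k] : (0:ℝ) ≤ X k - x)]
          have := hXltn k hk
          rw [hX0] at hT
          linarith
        have h3 : ω |X k - x| ≤ ω δ := hω.mono' (abs_nonneg _) habs hδ1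
        nlinarith
      rcases le_or_gt (φ x - 1) (2*C₀* ω δ) with hA2 | hA2
      · -- A2a
        refine le_trans (hprodle n (6*C₀) le_rfl (by positivity) ?_) (hfinish (6*C₀) (by linarith))
        intro k hk
        have := hterm k hk
        have h4 : φ (X k) ≤ 1 + 6*C₀/(n:ℝ) := by
          rw [hωδ] at this hA2
          have h5 : 6*C₀/(n:ℝ) = 3*(C₀ * (2/(n:ℝ))) := by ring
          rw [h5]
          nlinarith
        calc φ (X k) ≤ 1 + (6*C₀)/(n:ℝ) := h4
          _ ≤ Real.exp ((6*C₀)/(n:ℝ)) := by linarith [Real.add_one_le_exp ((6*C₀)/(n:ℝ))]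
      · -- A2b
        have hxXn : x < X n := by rw [← hX0]; exact hXmono (by omega)
        have hmonoD : MonotoneOn (fun t => f t - t) (Icc x (X n)) := by
          apply StrictMonoOn.monotoneOn
          apply strictMonoOn_of_deriv_pos (convex_Icc x (X n))
            ((hcf.mono (Icc_subset_Icc hx.1 (hXI n).2)).sub continuousOn_id)
          intro z hz
          rw [interior_Icc] at hz
          have hzIoo : z ∈ Ioo (0:ℝ) 1 :=
            ⟨lt_of_le_of_lt hx.1 hz.1, lt_of_lt_of_le hz.2 (hXI n).2⟩
          have hDz : HasDerivAt (fun t => f t - id t) (φ z - 1) z :=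
            (hDA z hzIoo).sub (hasDerivAt_id z)
          rw [show deriv (f - id) z = φ z - 1 from hDz.deriv]
          have h := (abs_le.1 (hmod x hx z (Ioo_subset_Icc_self hzIoo))).2
          have habs : |x - z| ≤ δ := by
            rw [abs_of_nonpos (by linarith [hz.1] : x - z ≤ 0)]
            rw [hX0] at hT
            have := hz.2
            linarith
          have h3 : ω |x - z| ≤ ω δ := hω.mono' (abs_nonneg _) habs hδ1
          nlinarith
        have hsk_ge : ∀ k, k < n → f x - x ≤ s k := by
          intro k hk
          have h1 : (fun t => f t - t) x ≤ (fun t => f t - t) (X k) := by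
            apply hmonoD (left_mem_Icc.2 hxXn.le) ⟨hXgex k, hXltn k hk⟩ (hXgex k)
          simp only at h1
          have : s k = f (X k) - X k := by rw [hs]; simp only; rw [hXsucc' k]
          linarith [this ▸ h1]
        have hTge : (n:ℝ) * (f x - x) ≤ X n - X 0 := by
          rw [← hsumr n]
          have := Finset.card_nsmul_le_sum (Finset.range n) s (f x - x)
            (fun k hk => hsk_ge k (Finset.mem_range.1 hk))
          rwa [Finset.card_range, nsmul_eq_mul] at this
        have hεδn : f x - x ≤ δ/(n:ℝ) := by
          rw [le_div_iff₀ hn0]; nlinarith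
        have hβx' : φ x - 1 ≤ (1 + 2*C₀)/(n:ℝ) := by
          have h1 : (f x - x)/δ ≤ 1/(n:ℝ) := by
            rw [div_le_div_iff₀ hδ0 hn0]; nlinarith
          rw [hωδ] at hβx
          have : C₀ * (2/(n:ℝ)) = 2*C₀/(n:ℝ) := by ring
          rw [this] at hβx
          calc φ x - 1 ≤ 1/(n:ℝ) + 2*C₀/(n:ℝ) := by linarith
            _ = (1 + 2*C₀)/(n:ℝ) := by ring
        refine le_trans (hprodle n (1+4*C₀) le_rfl (by positivity) ?_)
          (hfinish (1+4*C₀) (by linarith))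
        intro k hk
        have := hterm k hk
        rw [hωδ] at this
        have h4 : φ (X k) ≤ 1 + (1+4*C₀)/(n:ℝ) := by
          have : φ (X k) ≤ φ x + 2*C₀/(n:ℝ) := by
            calc φ (X k) ≤ φ x + C₀ * (2/(n:ℝ)) := this
              _ = φ x + 2*C₀/(n:ℝ) := by ring
          calc φ (X k) ≤ (1 + (1 + 2*C₀)/(n:ℝ)) + 2*C₀/(n:ℝ) := by linarith [hβx']
            _ = 1 + ((1 + 2*C₀)/(n:ℝ) + 2*C₀/(n:ℝ)) := by ring
            _ = 1 + (1+4*C₀)/(n:ℝ) := by rw [← add_div]; ring_nf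
        calc φ (X k) ≤ 1 + (1+4*C₀)/(n:ℝ) := h4
          _ ≤ Real.exp ((1+4*C₀)/(n:ℝ)) := by linarith [Real.add_one_le_exp ((1+4*C₀)/(n:ℝ))]
  · -- big movement : case B
    have hTbig : x + δ < X n := by rw [hX0] at hT; linarith
    set P : ℕ → Prop := fun k => X k ≤ x + δ with hPdef
    have hP0 : P 0 := by rw [hPdef]; simp only [hX0]; linarith
    set k₁ : ℕ := Nat.findGreatest P n with hk₁def
    have hk₁P : P k₁ := Nat.findGreatest_spec (Nat.zero_le n) hP0
    have hk₁n : k₁ ≤ n := Nat.findGreatest_le n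
    have hk₁lt : k₁ < n := by
      rcases eq_or_lt_of_le hk₁n with heq | h
      · exfalso
        have : X n ≤ x + δ := by rw [← heq]; exact hk₁P
        linarith
      · exact h
    have hnext : x + δ < X (k₁+1) :=
      not_le.1 (Nat.findGreatest_is_greatest (Nat.lt_succ_self k₁) hk₁lt)
    have hsum1 : δ < ∑ k ∈ Finset.range (k₁+1), s k := by
      rw [hsumr (k₁+1), hX0]; linarith
    obtain ⟨j, hjk₁, hsj⟩ : ∃ j, j ≤ k₁ ∧ δ/(n:ℝ) < s j := by
      by_contra hcon
      push_neg at hcon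
      have hle : ∑ k ∈ Finset.range (k₁+1), s k ≤ (Finset.range (k₁+1)).card • (δ/(n:ℝ)) :=
        Finset.sum_le_card_nsmul _ _ _
          (fun k hk => hcon k (Nat.lt_succ_iff.1 (Finset.mem_range.1 hk)))
      rw [Finset.card_range, nsmul_eq_mul] at hle
      have hcast : ((k₁+1:ℕ):ℝ) ≤ (n:ℝ) := by exact_mod_cast hk₁lt
      have h2 : ((k₁+1:ℕ):ℝ) * (δ/(n:ℝ)) ≤ (n:ℝ) * (δ/(n:ℝ)) :=
        mul_le_mul_of_nonneg_right hcast (by positivity)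
      have h3 : (n:ℝ) * (δ/(n:ℝ)) = δ := by field_simp
      push_cast at hle h2 hcast
      linarith
    have hjn : j < n := lt_of_le_of_lt hjk₁ hk₁lt
    have hXjx : X j ≤ x + δ := le_trans (hXmono.monotone hjk₁) hk₁P
    -- head estimate
    have hhead : ∏ k ∈ Finset.range j, φ (X k) ≤ Real.exp (6*C₀ + 1) := by
      rcases le_or_gt (x - p) (2*δ) with hxp | hxp
      · refine le_trans (hprodle j (6*C₀) hjn.le (by positivity) ?_)
          (Real.exp_le_exp.2 (by linarith))
        intro k hk
        have hXkx : X k ≤ x + δ := le_trans (hXmono.monotone (le_of_lt (lt_of_lt_of_le hk hjk₁))) hk₁P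
        have h1 : φ (X k) - 1 ≤ C₀ * ω (X k - p) := by
          have h := (abs_le.1 (hmod (X k) (hXI k) p hpI)).2
          rw [hφp, abs_of_nonneg (by linarith [hXp k] : (0:ℝ) ≤ X k - p)] at h
          linarith
        have h2 : X k - p ≤ 3*δ := by linarith
        have h3 : ω (X k - p) ≤ ω (3*δ) := hω.mono' (by linarith [hXp k]) h2 h3δ
        have h4 : φ (X k) ≤ 1 + C₀ * (6/(n:ℝ)) := by nlinarith [hω3δ]
        have h5 : C₀ * (6/(n:ℝ)) = (6*C₀)/(n:ℝ) := by ring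
        calc φ (X k) ≤ 1 + (6*C₀)/(n:ℝ) := by rw [← h5]; exact h4
          _ ≤ Real.exp ((6*C₀)/(n:ℝ)) := by linarith [Real.add_one_le_exp ((6*C₀)/(n:ℝ))]
      · -- far from p : use the dip estimates with sliding base point
        have hterm : ∀ k, k < j → φ (X k) ≤ Real.exp (s k/δ + 2*C₀/(n:ℝ)) := by
          intro k hk
          have hXkx : X k ≤ x + δ := le_trans (hXmono.monotone (le_of_lt (lt_of_lt_of_le hk hjk₁))) hk₁P
          have hβk : φ (X k) - 1 ≤ (f (X k) - X k)/δ + C₀ * ω δ := by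
            apply hβ (X k) (hXI k) (by linarith [hXgex k]) (hXltn k (lt_of_lt_of_le hk hjn.le))
          have hfXk : f (X k) - X k = s k := by rw [hs]; simp only; rw [hXsucc' k]
          rw [hfXk, hωδ] at hβk
          have h6 : C₀ * (2/(n:ℝ)) = 2*C₀/(n:ℝ) := by ring
          rw [h6] at hβk
          calc φ (X k) ≤ 1 + (s k/δ + 2*C₀/(n:ℝ)) := by linarith
            _ ≤ Real.exp (s k/δ + 2*C₀/(n:ℝ)) := by
                linarith [Real.add_one_le_exp (s k/δ + 2*C₀/(n:ℝ))]
        calc ∏ k ∈ Finset.range j, φ (X k)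
            ≤ ∏ k ∈ Finset.range j, Real.exp (s k/δ + 2*C₀/(n:ℝ)) := by
              apply Finset.prod_le_prod (fun k _ => (hφpos _ (hXI k)).le)
                (fun k hk => hterm k (Finset.mem_range.1 hk))
          _ = Real.exp (∑ k ∈ Finset.range j, (s k/δ + 2*C₀/(n:ℝ))) := by
              rw [Real.exp_sum]
          _ ≤ Real.exp (6*C₀ + 1) := by
              apply Real.exp_le_exp.2
              rw [Finset.sum_add_distrib, ← Finset.sum_div, hsumr j, hX0]
              have h1 : (X j - x)/δ ≤ 1 := by
                rw [div_le_one hδ0]; linarith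
              have h2 : ∑ _k ∈ Finset.range j, 2*C₀/(n:ℝ) = (j:ℝ) * (2*C₀/(n:ℝ)) := by
                rw [Finset.sum_const, Finset.card_range, nsmul_eq_mul]
              have hjn' : (j:ℝ) ≤ (n:ℝ) := by exact_mod_cast hjn.le
              have h3 : (j:ℝ) * (2*C₀/(n:ℝ)) ≤ (n:ℝ) * (2*C₀/(n:ℝ)) :=
                mul_le_mul_of_nonneg_right hjn' (by positivity)
              have h4 : (n:ℝ) * (2*C₀/(n:ℝ)) = 2*C₀ := by field_simp
              rw [h2]
              nlinarith
    -- tail estimate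
    have hξex : ∀ k, ∃ c ∈ Ioo (X k) (X (k+1)), φ c = s (k+1) / s k := by
      intro k
      obtain ⟨c, hc, hcv⟩ := hmvt (X k) (X (k+1)) (hXlt k) (hXI k) (hXI (k+1))
      refine ⟨c, hc, ?_⟩
      rw [hcv]
      have h1 : f (X (k+1)) = X (k+2) := (hXsucc' (k+1)).symm
      have h2 : f (X k) = X (k+1) := (hXsucc' k).symm
      rw [h1, h2]
    choose ξ hξmem hξval using hξex
    have hξI : ∀ k, ξ k ∈ 𝕀 := fun k =>
      ⟨(hXI k).1.trans (hξmem k).1.le, (hξmem k).2.le.trans (hXI (k+1)).2⟩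
    have hsk1 : ∀ k, s k ≤ 1 := fun k => by
      have h1 := (hXI (k+1)).2
      have h2 := (hXI k).1
      rw [hs]; simp only; linarith
    have htermtail : ∀ k, φ (X k) ≤ φ (ξ k) * Real.exp ((C₀/m) * ω (s k)) := by
      intro k
      have hωs : 0 ≤ ω (s k) := hω.nonneg' (hs_pos k).le (hsk1 k)
      have h1 : φ (X k) ≤ φ (ξ k) + C₀ * ω (s k) := by
        have h := (abs_le.1 (hmod (X k) (hXI k) (ξ k) (hξI k))).2
        have habs : |X k - ξ k| ≤ s k := by
          rw [abs_of_nonpos (by linarith [(hξmem k).1] : X k - ξ k ≤ 0)]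
          have := (hξmem k).2
          rw [hs]; simp only; linarith
        have h3 : ω |X k - ξ k| ≤ ω (s k) := hω.mono' (abs_nonneg _) habs (hsk1 k)
        nlinarith
      have hm' : m ≤ φ (ξ k) := hφm _ (hξI k)
      have h2 : C₀ * ω (s k) ≤ φ (ξ k) * ((C₀/m) * ω (s k)) := by
        have hkey : m * ((C₀/m) * ω (s k)) = C₀ * ω (s k) := by field_simp
        have hmm := mul_le_mul_of_nonneg_right hm'
          (show (0:ℝ) ≤ (C₀/m) * ω (s k) by positivity)
        rw [← hkey]
        exact hmm
      have h3 : φ (ξ k) * (1 + (C₀/m) * ω (s k)) ≤ φ (ξ k) * Real.exp ((C₀/m) * ω (s k)) := by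
        apply mul_le_mul_of_nonneg_left _ (lt_of_lt_of_le hm0 hm').le
        linarith [Real.add_one_le_exp ((C₀/m) * ω (s k))]
      calc φ (X k) ≤ φ (ξ k) + C₀ * ω (s k) := h1
        _ = φ (ξ k) * 1 + C₀ * ω (s k) := by ring_nf
        _ ≤ φ (ξ k) * (1 + (C₀/m) * ω (s k)) := by nlinarith [h2]
        _ ≤ φ (ξ k) * Real.exp ((C₀/m) * ω (s k)) := h3
    have htel : ∀ b, j ≤ b → ∏ k ∈ Finset.Ico j b, (s (k+1) / s k) = s b / s j := by
      intro b hb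
      induction b, hb using Nat.le_induction with
      | base => rw [Finset.Ico_self, Finset.prod_empty, div_self (ne_of_gt (hs_pos j))]
      | succ b hb ih =>
        rw [Finset.prod_Ico_succ_top hb, ih, div_mul_div_comm,
          mul_comm (s j) (s b), mul_div_mul_left _ _ (ne_of_gt (hs_pos b))]
    have htail : ∏ k ∈ Finset.Ico j n, φ (X k)
        ≤ ((n:ℝ)/δ) * Real.exp ((2*C₀/m)*((n:ℝ)*ω (1/(n:ℝ)))) := by
      calc ∏ k ∈ Finset.Ico j n, φ (X k)
          ≤ ∏ k ∈ Finset.Ico j n, (φ (ξ k) * Real.exp ((C₀/m) * ω (s k))) := by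
            apply Finset.prod_le_prod (fun k _ => (hφpos _ (hXI k)).le)
              (fun k _ => htermtail k)
        _ = (∏ k ∈ Finset.Ico j n, φ (ξ k)) *
            ∏ k ∈ Finset.Ico j n, Real.exp ((C₀/m) * ω (s k)) := Finset.prod_mul_distrib
        _ ≤ ((n:ℝ)/δ) * Real.exp ((2*C₀/m)*((n:ℝ)*ω (1/(n:ℝ)))) := by
            apply mul_le_mul
            · -- telescoping
              have h1 : ∏ k ∈ Finset.Ico j n, φ (ξ k) = s n / s j := by
                rw [Finset.prod_congr rfl (fun k _ => hξval k)]
                exact htel n hjn.le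
              rw [h1]
              have h2 : s n / s j ≤ 1 / (δ/(n:ℝ)) :=
                div_le_div₀ (by norm_num) (hsk1 n) (by positivity) hsj.le
              rwa [one_div_div] at h2
            · rw [← Real.exp_sum]
              apply Real.exp_le_exp.2
              rw [← Finset.mul_sum]
              have hsum2 : ∑ k ∈ Finset.Ico j n, ω (s k) ≤ 2*((n:ℝ)*ω (1/(n:ℝ))) := by
                have hb : ∀ k ∈ Finset.Ico j n, ω (s k) ≤ ((n:ℝ) * s k + 1) * ω (1/(n:ℝ)) :=
                  fun k _ => hω.le_mul (hs_pos k).le (hsk1 k) hn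
                calc ∑ k ∈ Finset.Ico j n, ω (s k)
                    ≤ ∑ k ∈ Finset.Ico j n, ((n:ℝ) * s k + 1) * ω (1/(n:ℝ)) :=
                      Finset.sum_le_sum hb
                  _ = ((n:ℝ) * (∑ k ∈ Finset.Ico j n, s k) + ((n - j : ℕ):ℝ)) * ω (1/(n:ℝ)) := by
                      rw [← Finset.sum_mul, Finset.sum_add_distrib, Finset.sum_const,
                        Nat.card_Ico, ← Finset.mul_sum, nsmul_eq_mul, mul_one]
                  _ ≤ 2*((n:ℝ)*ω (1/(n:ℝ))) := by
                      have h5 : ∑ k ∈ Finset.Ico j n, s k = X n - X j := hsum j n hjn.le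
                      have h6 : X n - X j ≤ 1 := by
                        have := (hXI n).2; have := (hXI j).1; linarith
                      have h7 : ((n - j : ℕ):ℝ) ≤ (n:ℝ) := by
                        have : n - j ≤ n := Nat.sub_le n j
                        exact_mod_cast this
                      rw [h5]
                      have h8 : (n:ℝ)*(X n - X j) + ((n-j:ℕ):ℝ) ≤ 2*(n:ℝ) := by nlinarith
                      calc ((n:ℝ)*(X n - X j) + ((n-j:ℕ):ℝ)) * ω (1/(n:ℝ))
                          ≤ (2*(n:ℝ)) * ω (1/(n:ℝ)) := mul_le_mul_of_nonneg_right h8 hω1n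
                        _ = 2*((n:ℝ)*ω (1/(n:ℝ))) := by ring
              calc (C₀/m) * ∑ k ∈ Finset.Ico j n, ω (s k)
                  ≤ (C₀/m) * (2*((n:ℝ)*ω (1/(n:ℝ)))) := by
                    apply mul_le_mul_of_nonneg_left hsum2 (by positivity)
                _ = (2*C₀/m)*((n:ℝ)*ω (1/(n:ℝ))) := by ring
            · positivity
            · positivity
    -- combine head and tail
    have hsplit : ∏ k ∈ Finset.range n, φ (X k)
        = (∏ k ∈ Finset.range j, φ (X k)) * ∏ k ∈ Finset.Ico j n, φ (X k) := by
      rw [Finset.range_eq_Ico, Finset.range_eq_Ico]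
      exact (Finset.prod_Ico_consecutive _ (Nat.zero_le j) hjn.le).symm
    rw [hsplit]
    have hpos1 : (0:ℝ) ≤ ∏ k ∈ Finset.range j, φ (X k) :=
      Finset.prod_nonneg (fun k _ => (hφpos _ (hXI k)).le)
    calc (∏ k ∈ Finset.range j, φ (X k)) * ∏ k ∈ Finset.Ico j n, φ (X k)
        ≤ Real.exp (6*C₀ + 1) * (((n:ℝ)/δ) * Real.exp ((2*C₀/m)*((n:ℝ)*ω (1/(n:ℝ))))) := by
          apply mul_le_mul hhead htail
            (Finset.prod_nonneg (fun k _ => (hφpos _ (hXI k)).le)) (Real.exp_pos _).le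
      _ ≤ ((n:ℝ)/δ) * Real.exp ((6*C₀+2) + (2*C₀/m)*((n:ℝ)*ω (1/(n:ℝ)))) := by
          rw [← mul_assoc, mul_comm (Real.exp (6*C₀+1)) ((n:ℝ)/δ), mul_assoc,
            ← Real.exp_add]
          apply mul_le_mul_of_nonneg_left _ (by positivity)
          apply Real.exp_le_exp.2
          linarith

lemma refl_mem {y : ℝ} (hy : y ∈ 𝕀) : 1 - y ∈ 𝕀 := ⟨by linarith [hy.2], by linarith [hy.1]⟩

lemma refl_iterate (f : ℝ → ℝ) (k : ℕ) (x : ℝ) :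
    (fun y => 1 - f (1 - y))^[k] (1 - x) = 1 - f^[k] x := by
  induction k with
  | zero => simp
  | succ k ih =>
    rw [Function.iterate_succ_apply', ih, Function.iterate_succ_apply']
    simp

lemma refl_deriv {f : ℝ → ℝ} (hcd : ContDiffOn ℝ 1 f 𝕀) {y : ℝ} (hy : y ∈ 𝕀) :
    derivWithin (fun z => 1 - f (1 - z)) 𝕀 y = derivWithin f 𝕀 (1 - y) := by
  have hI : UniqueDiffOn ℝ 𝕀 := uniqueDiffOn_Icc one_pos
  have h1y : 1 - y ∈ 𝕀 := refl_mem hy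
  have hrmaps : Set.MapsTo (fun z : ℝ => 1 - z) 𝕀 𝕀 := fun z hz => refl_mem hz
  have h1 : HasDerivWithinAt (fun z : ℝ => 1 - z) (-1) 𝕀 y := by
    simpa using (hasDerivWithinAt_id y 𝕀).const_sub (1:ℝ)
  have h2 : HasDerivWithinAt f (derivWithin f 𝕀 (1-y)) 𝕀 (1-y) :=
    (hcd.differentiableOn one_ne_zero _ h1y).hasDerivWithinAt
  have h3 : HasDerivWithinAt (fun z => f (1 - z)) (derivWithin f 𝕀 (1-y) * (-1)) 𝕀 y :=
    HasDerivWithinAt.comp y h2 h1 hrmaps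
  have h4 : HasDerivWithinAt (fun z => 1 - f (1 - z)) (-(derivWithin f 𝕀 (1-y) * (-1))) 𝕀 y :=
    h3.const_sub 1
  rw [h4.derivWithin (hI y hy)]; ring

lemma refl_contDiffOn {f : ℝ → ℝ} (hmaps : Set.MapsTo f 𝕀 𝕀) (hcd : ContDiffOn ℝ 1 f 𝕀) :
    ContDiffOn ℝ 1 (fun z => 1 - f (1 - z)) 𝕀 := by
  have hrcd : ContDiffOn ℝ 1 (fun z : ℝ => 1 - z) 𝕀 :=
    (contDiff_const.sub contDiff_id).contDiffOn
  have hrmaps : Set.MapsTo (fun z : ℝ => 1 - z) 𝕀 𝕀 := fun z hz => refl_mem hz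
  have h1 : ContDiffOn ℝ 1 (fun z => f (1 - z)) 𝕀 := hcd.comp hrcd hrmaps
  exact hrcd.comp h1 (fun z hz => hmaps (hrmaps hz))

lemma pointwise_decr (ω f : ℝ → ℝ) (hω : IsModCont ω)
    (C₀ m : ℝ) (hC₀ : 0 < C₀) (hm0 : 0 < m) (hm1 : m ≤ 1)
    (hf1 : f 1 = 1)
    (hmaps : Set.MapsTo f 𝕀 𝕀) (hcd : ContDiffOn ℝ 1 f 𝕀)
    (hφm : ∀ y ∈ 𝕀, m ≤ derivWithin f 𝕀 y)
    (hmod : ∀ u ∈ 𝕀, ∀ v ∈ 𝕀, |derivWithin f 𝕀 u - derivWithin f 𝕀 v| ≤ C₀ * ω |u - v|)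
    (hfix : ∀ p ∈ 𝕀, f p = p → derivWithin f 𝕀 p = 1)
    (n : ℕ) (hn : 1 ≤ n) (δ : ℝ) (hδ0 : 0 < δ) (h3δ : 3*δ ≤ 1) (hωδ : ω δ = 2/(n:ℝ))
    (x : ℝ) (hx : x ∈ 𝕀) (hxf : f x < x) :
    ∏ k ∈ Finset.range n, derivWithin f 𝕀 (f^[k] x)
      ≤ ((n:ℝ)/δ) * Real.exp ((6*C₀+2) + (2*C₀/m)*((n:ℝ)*ω (1/(n:ℝ)))) := by
  set F : ℝ → ℝ := fun z => 1 - f (1 - z) with hF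
  have hrmaps : Set.MapsTo (fun z : ℝ => 1 - z) 𝕀 𝕀 := fun z hz => refl_mem hz
  have hFmaps : Set.MapsTo F 𝕀 𝕀 := fun z hz => refl_mem (hmaps (refl_mem hz))
  have hFcd : ContDiffOn ℝ 1 F 𝕀 := refl_contDiffOn hmaps hcd
  have hF0 : F 0 = 0 := by simp [hF, hf1]
  have hFφm : ∀ y ∈ 𝕀, m ≤ derivWithin F 𝕀 y := by
    intro y hy
    rw [hF, refl_deriv hcd hy]
    exact hφm _ (refl_mem hy)
  have hFmod : ∀ u ∈ 𝕀, ∀ v ∈ 𝕀,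
      |derivWithin F 𝕀 u - derivWithin F 𝕀 v| ≤ C₀ * ω |u - v| := by
    intro u hu v hv
    rw [hF, refl_deriv hcd hu, refl_deriv hcd hv]
    have h1 : |1 - u - (1 - v)| = |u - v| := by
      rw [show (1:ℝ) - u - (1 - v) = -(u - v) by ring, abs_neg]
    rw [← h1]
    exact hmod _ (refl_mem hu) _ (refl_mem hv)
  have hFfix : ∀ p ∈ 𝕀, F p = p → derivWithin F 𝕀 p = 1 := by
    intro q hq hFq
    rw [hF, refl_deriv hcd hq]
    apply hfix _ (refl_mem hq)
    have : 1 - f (1 - q) = q := hFq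
    linarith
  have hxm : 1 - x ∈ 𝕀 := refl_mem hx
  have hxFf : 1 - x < F (1 - x) := by
    have : F (1 - x) = 1 - f x := by simp [hF]
    rw [this]; linarith
  have hmain := pointwise_incr ω F hω C₀ m hC₀ hm0 hm1 hF0 hFmaps hFcd hFφm hFmod hFfix
    n hn δ hδ0 h3δ hωδ (1 - x) hxm hxFf
  have hcongr : ∏ k ∈ Finset.range n, derivWithin F 𝕀 (F^[k] (1 - x))
      = ∏ k ∈ Finset.range n, derivWithin f 𝕀 (f^[k] x) := by
    apply Finset.prod_congr rfl
    intro k _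
    have h1 : F^[k] (1 - x) = 1 - f^[k] x := refl_iterate f k x
    have h2 : f^[k] x ∈ 𝕀 := (hmaps.iterate k) hx
    rw [h1, hF, refl_deriv hcd (refl_mem h2)]
    norm_num
  rwa [hcongr] at hmain


set_option maxHeartbeats 1000000 in
lemma side (ω f g : ℝ → ℝ) (hω : IsModCont ω) (hsm : StrictMonoOn ω (Set.Icc (0:ℝ) 1))
    (hf : IsDiff01 f g) (hfω : InDiffOmega ω f)
    (hfix : ∀ p ∈ 𝕀, f p = p → derivWithin f 𝕀 p = 1) :
    ∃ A > 0, ∀ n : ℕ, 1 ≤ n → ∀ δ : ℝ, 0 < δ → δ ≤ 1 → ω δ = 2/(n:ℝ) →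
      supAbsDeriv (f^[n]) ≤ ((n:ℝ)/δ) * Real.exp (A * (1 + (n:ℝ)*ω (1/(n:ℝ)))) := by
  obtain ⟨C₀, hC₀, hmod⟩ := hfω
  have hI : UniqueDiffOn ℝ 𝕀 := uniqueDiffOn_Icc one_pos
  have hmaps := hf.mapsTo
  have hcd := hf.contDiffOn
  have hφc : ContinuousOn (derivWithin f 𝕀) 𝕀 := hcd.continuousOn_derivWithin hI le_rfl
  have h0I : (0:ℝ) ∈ 𝕀 := left_mem_Icc.2 zero_le_one
  have h1I : (1:ℝ) ∈ 𝕀 := right_mem_Icc.2 zero_le_one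
  have hK : IsCompact ((derivWithin f 𝕀) '' 𝕀) := isCompact_Icc.image_of_continuousOn hφc
  have hKne : ((derivWithin f 𝕀) '' 𝕀).Nonempty := ⟨_, Set.mem_image_of_mem _ h0I⟩
  set m : ℝ := sInf ((derivWithin f 𝕀) '' 𝕀) with hmdef
  set M : ℝ := sSup ((derivWithin f 𝕀) '' 𝕀) with hMdef
  have hmK : m ∈ (derivWithin f 𝕀) '' 𝕀 := hK.sInf_mem hKne
  obtain ⟨y₀, hy₀, hy₀m⟩ := hmK
  have hm0 : 0 < m := by rw [← hy₀m]; exact hf.deriv_pos y₀ hy₀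
  have hφm : ∀ y ∈ 𝕀, m ≤ derivWithin f 𝕀 y := fun y hy =>
    csInf_le hK.bddBelow (Set.mem_image_of_mem _ hy)
  have hφM : ∀ y ∈ 𝕀, derivWithin f 𝕀 y ≤ M := fun y hy =>
    le_csSup hK.bddAbove (Set.mem_image_of_mem _ hy)
  have hφ0 : derivWithin f 𝕀 0 = 1 := hfix 0 h0I hf.map_zero
  have hm1 : m ≤ 1 := by rw [← hφ0]; exact hφm 0 h0I
  have hM1 : 1 ≤ M := by rw [← hφ0]; exact hφM 0 h0I
  have h13I : (1/3:ℝ) ∈ 𝕀 := ⟨by norm_num, by norm_num⟩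
  have hω13 : 0 < ω (1/3) := by
    have := hsm h0I h13I (by norm_num)
    rwa [hω.map_zero] at this
  have hlogM : 0 ≤ Real.log M := Real.log_nonneg hM1
  set A : ℝ := (6*C₀+2) + 2*C₀/m + (2/ω (1/3)) * Real.log M + 1 with hAdef
  have hA : 0 < A := by positivity
  refine ⟨A, hA, ?_⟩
  intro n hn δ hδ0 hδ1 hωδ
  have hn0 : (0:ℝ) < n := by exact_mod_cast hn
  have hn1 : (1:ℝ) ≤ n := by exact_mod_cast hn
  have hω1n : 0 ≤ ω (1/(n:ℝ)) := hω.nonneg' (by positivity) (by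
    rw [div_le_one hn0]; exact hn1)
  set t : ℝ := (n:ℝ)*ω (1/(n:ℝ)) with htdef
  have ht0 : 0 ≤ t := by positivity
  have hnδ1 : (1:ℝ) ≤ (n:ℝ)/δ := by rw [le_div_iff₀ hδ0]; linarith
  have key : ∀ x ∈ 𝕀, ∏ k ∈ Finset.range n, derivWithin f 𝕀 (f^[k] x)
      ≤ ((n:ℝ)/δ) * Real.exp (A * (1 + t)) := by
    intro x hx
    by_cases h3δ : 3*δ ≤ 1
    · have hboost : ((n:ℝ)/δ) * Real.exp ((6*C₀+2) + (2*C₀/m)*t)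
          ≤ ((n:ℝ)/δ) * Real.exp (A * (1 + t)) := by
        apply mul_le_mul_of_nonneg_left _ (by positivity)
        apply Real.exp_le_exp.2
        have hp1 : 0 ≤ 2*C₀/m := by positivity
        have hp2 : 0 ≤ (2/ω (1/3)) * Real.log M := by positivity
        have h1 : 6*C₀+2 ≤ A := by rw [hAdef]; linarith
        have h2 : 2*C₀/m ≤ A := by rw [hAdef]; linarith
        nlinarith [mul_le_mul_of_nonneg_right h2 ht0]
      rcases lt_trichotomy x (f x) with hlt | heq | hgt
      · exact le_trans (pointwise_incr ω f hω C₀ m hC₀ hm0 hm1 hf.map_zero hmaps hcd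
          hφm hmod hfix n hn δ hδ0 h3δ hωδ x hx hlt) hboost
      · have hfixx : f x = x := heq.symm
        have hprod : ∏ k ∈ Finset.range n, derivWithin f 𝕀 (f^[k] x) = 1 := by
          rw [Finset.prod_congr rfl (fun k _ => by
            rw [Function.iterate_fixed hfixx k, hfix x hx hfixx])]
          simp
        rw [hprod]
        calc (1:ℝ) ≤ (n:ℝ)/δ := hnδ1
          _ ≤ ((n:ℝ)/δ) * Real.exp (A * (1 + t)) := by
              nlinarith [Real.exp_pos (A * (1+t)), Real.one_le_exp (by positivity : (0:ℝ) ≤ A * (1+t)), hnδ1]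
      · exact le_trans (pointwise_decr ω f hω C₀ m hC₀ hm0 hm1 hf.map_one hmaps hcd
          hφm hmod hfix n hn δ hδ0 h3δ hωδ x hx hgt) hboost
    · -- crude bound for small n
      push_neg at h3δ
      have hδ13 : 1/3 ≤ δ := by linarith
      have hω13δ : ω (1/3) ≤ 2/(n:ℝ) := by
        rw [← hωδ]; exact hω.mono' (by norm_num) hδ13 hδ1
      have hnle : (n:ℝ) ≤ 2/ω (1/3) := by
        rw [le_div_iff₀ hω13]
        have h1 := mul_le_mul_of_nonneg_left hω13δ hn0.le
        have h2 : (n:ℝ)*(2/(n:ℝ)) = 2 := by field_simp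
        linarith
      have hMn : ∏ k ∈ Finset.range n, derivWithin f 𝕀 (f^[k] x) ≤ M^n := by
        calc ∏ k ∈ Finset.range n, derivWithin f 𝕀 (f^[k] x)
            ≤ ∏ _k ∈ Finset.range n, M := by
              apply Finset.prod_le_prod
                (fun k _ => (hf.deriv_pos _ ((hmaps.iterate k) hx)).le)
                (fun k _ => hφM _ ((hmaps.iterate k) hx))
          _ = M^n := by rw [Finset.prod_const, Finset.card_range]
      have hM0 : (0:ℝ) < M := lt_of_lt_of_le one_pos hM1
      have hMexp : M^n = Real.exp ((n:ℝ) * Real.log M) := by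
        rw [Real.exp_nat_mul, Real.exp_log hM0]
      have hfin : (n:ℝ) * Real.log M ≤ A * (1 + t) := by
        have h1 : (n:ℝ) * Real.log M ≤ (2/ω (1/3)) * Real.log M :=
          mul_le_mul_of_nonneg_right hnle hlogM
        have hp1 : 0 ≤ 2*C₀/m := by positivity
        have h2 : (2/ω (1/3)) * Real.log M ≤ A := by rw [hAdef]; nlinarith [hC₀]
        have h3 : A ≤ A*(1+t) := by nlinarith [hA, ht0]
        exact h1.trans (h2.trans h3)
      calc ∏ k ∈ Finset.range n, derivWithin f 𝕀 (f^[k] x) ≤ M^n := hMn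
        _ = Real.exp ((n:ℝ) * Real.log M) := hMexp
        _ ≤ Real.exp (A * (1+t)) := Real.exp_le_exp.2 hfin
        _ ≤ ((n:ℝ)/δ) * Real.exp (A * (1+t)) :=
            le_mul_of_one_le_left (Real.exp_pos _).le hnδ1
  -- wrap into the supremum
  apply Real.sSup_le
  · rintro v ⟨y, hy, rfl⟩
    show |derivWithin (f^[n]) 𝕀 y| ≤ _
    rw [iter_deriv_prod hmaps hcd n hy]
    rw [abs_of_nonneg (Finset.prod_nonneg
      (fun k _ => (hf.deriv_pos _ ((hmaps.iterate k) hy)).le))]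
    exact key y hy
  · positivity


set_option maxHeartbeats 1000000 in
/-- **Theorem 4.** Let `ω` be a strictly increasing modulus of continuity with inverse
`winv`. Then for every `f ∈ Diff₀^ω[0,1]` with `γ(f) = 1` there is `C(f) > 0` such that
`log Γ_n(f) ≤ log (n / ω⁻¹(2/n)) + C(f) · n · ω(1/n)` whenever `2/n ≤ ω(1)`. -/
theorem growth_gap_modulus (ω : ℝ → ℝ) (hω : IsModCont ω)
    (hsm : StrictMonoOn ω (Set.Icc (0:ℝ) 1))
    (winv : ℝ → ℝ) (hwinv : ∀ x ∈ Set.Icc (0:ℝ) 1, winv (ω x) = x)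
    (f g : ℝ → ℝ) (hf : IsDiff01 f g) (hfω : InDiffOmega ω f) (hγ : GammaEqOne f g) :
    ∃ C > 0, ∀ n : ℕ, 1 ≤ n → 2 / (n:ℝ) ≤ ω 1 →
      Real.log (Gamma f g n)
        ≤ Real.log ((n:ℝ) / winv (2 / (n:ℝ))) + C * n * ω (1 / (n:ℝ)) := by
  have hI : UniqueDiffOn ℝ 𝕀 := uniqueDiffOn_Icc one_pos
  have h0I : (0:ℝ) ∈ 𝕀 := left_mem_Icc.2 zero_le_one
  have h1I : (1:ℝ) ∈ 𝕀 := right_mem_Icc.2 zero_le_one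
  obtain ⟨C₀, hC₀, hmod⟩ := hfω
  have hfω' : InDiffOmega ω f := ⟨C₀, hC₀, hmod⟩
  have hmaps := hf.mapsTo
  have hcd := hf.contDiffOn
  have hdf : DifferentiableOn ℝ f 𝕀 := hcd.differentiableOn one_ne_zero
  have hcf : ContinuousOn f 𝕀 := hcd.continuousOn
  have hφc : ContinuousOn (derivWithin f 𝕀) 𝕀 := hcd.continuousOn_derivWithin hI le_rfl
  have hK : IsCompact ((derivWithin f 𝕀) '' 𝕀) := isCompact_Icc.image_of_continuousOn hφc
  have hKne : ((derivWithin f 𝕀) '' 𝕀).Nonempty := ⟨_, Set.mem_image_of_mem _ h0I⟩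
  set m : ℝ := sInf ((derivWithin f 𝕀) '' 𝕀) with hmdef
  have hmK : m ∈ (derivWithin f 𝕀) '' 𝕀 := hK.sInf_mem hKne
  obtain ⟨y₀, hy₀, hy₀m⟩ := hmK
  have hm0 : 0 < m := by rw [← hy₀m]; exact hf.deriv_pos y₀ hy₀
  have hφm : ∀ y ∈ 𝕀, m ≤ derivWithin f 𝕀 y := fun y hy =>
    csInf_le hK.bddBelow (Set.mem_image_of_mem _ hy)
  have hfix_f : ∀ p ∈ 𝕀, f p = p → derivWithin f 𝕀 p = 1 := fix_deriv_one hf hγ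
  -- inverse derivative formula
  have hψ : ∀ u ∈ 𝕀, derivWithin g 𝕀 u = (derivWithin f 𝕀 (g u))⁻¹ := by
    intro u hu
    have h := inv_deriv hf hu
    have hpos : 0 < derivWithin f 𝕀 (g u) := hf.deriv_pos _ (hf.inv_mapsTo hu)
    field_simp at h ⊢
    linarith
  have hg : IsDiff01 g f := by
    refine ⟨hf.inv_mapsTo, hf.mapsTo, hf.right_inv, hf.left_inv, ?_, ?_,
      hf.inv_contDiffOn, hf.contDiffOn, ?_⟩
    · rw [← hf.map_zero]; rw [hf.left_inv 0 h0I, hf.map_zero]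
    · rw [← hf.map_one]; rw [hf.left_inv 1 h1I, hf.map_one]
    · intro u hu
      rw [hψ u hu]
      exact inv_pos.2 (hf.deriv_pos _ (hf.inv_mapsTo hu))
  have hγg : GammaEqOne g f := by
    have hGG : ∀ k, Gamma g f k = Gamma f g k := fun k => max_comm _ _
    unfold GammaEqOne
    simp only [hGG]
    exact hγ
  have hfix_g : ∀ q ∈ 𝕀, g q = q → derivWithin g 𝕀 q = 1 := by
    intro q hq hgq
    have hfq : f q = q := by
      have := hf.right_inv q hq
      rwa [hgq] at this
    rw [hψ q hq, hgq, hfix_f q hq hfq]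
    norm_num
  -- expansion lower bound and inverse modulus
  have hDA : ∀ z ∈ Ioo (0:ℝ) 1, HasDerivAt f (derivWithin f 𝕀 z) z := fun z hz =>
    (hdf z (Ioo_subset_Icc_self hz)).hasDerivWithinAt.hasDerivAt (Icc_mem_nhds hz.1 hz.2)
  have haux : ∀ a b : ℝ, a ∈ 𝕀 → b ∈ 𝕀 → a < b → m*(b - a) ≤ f b - f a := by
    intro a b ha hb hab
    obtain ⟨c, hc, hcv⟩ := exists_hasDerivAt_eq_slope f (derivWithin f 𝕀) hab
      (hcf.mono (Icc_subset_Icc ha.1 hb.2))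
      (fun z hz => hDA z ⟨lt_of_le_of_lt ha.1 hz.1, lt_of_lt_of_le hz.2 hb.2⟩)
    have hcI : c ∈ 𝕀 := ⟨ha.1.trans hc.1.le, hc.2.le.trans hb.2⟩
    have h1 : m ≤ (f b - f a)/(b - a) := by rw [← hcv]; exact hφm c hcI
    rw [le_div_iff₀ (by linarith)] at h1
    linarith
  have hguv : ∀ u ∈ 𝕀, ∀ v ∈ 𝕀, m * |g u - g v| ≤ |u - v| := by
    intro u hu v hv
    have hgu : g u ∈ 𝕀 := hf.inv_mapsTo hu
    have hgv : g v ∈ 𝕀 := hf.inv_mapsTo hv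
    rcases lt_trichotomy (g u) (g v) with h | h | h
    · have := haux _ _ hgu hgv h
      rw [hf.right_inv u hu, hf.right_inv v hv] at this
      rw [abs_of_neg (by linarith : g u - g v < 0), abs_of_neg (by nlinarith : u - v < 0)]
      linarith
    · rw [h]; simp [abs_nonneg]
    · have := haux _ _ hgv hgu h
      rw [hf.right_inv u hu, hf.right_inv v hv] at this
      rw [abs_of_pos (by linarith : 0 < g u - g v), abs_of_pos (by nlinarith : 0 < u - v)]
      linarith
  set N : ℕ := ⌈1/m⌉₊ with hNdef
  have hN1 : 1 ≤ N := by
    rw [hNdef, Nat.one_le_iff_ne_zero, ← Nat.pos_iff_ne_zero]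
    exact Nat.ceil_pos.2 (by positivity)
  have h1mN : 1/m ≤ (N:ℝ) := Nat.le_ceil _
  have hgmod : InDiffOmega ω g := by
    refine ⟨C₀ * N / m^2, by positivity, ?_⟩
    intro u hu v hv
    rw [hψ u hu, hψ v hv]
    have hgu : g u ∈ 𝕀 := hf.inv_mapsTo hu
    have hgv : g v ∈ 𝕀 := hf.inv_mapsTo hv
    have hpu : 0 < derivWithin f 𝕀 (g u) := hf.deriv_pos _ hgu
    have hpv : 0 < derivWithin f 𝕀 (g v) := hf.deriv_pos _ hgv
    have ha : |(derivWithin f 𝕀 (g u))⁻¹ - (derivWithin f 𝕀 (g v))⁻¹|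
        = |derivWithin f 𝕀 (g v) - derivWithin f 𝕀 (g u)|
          / (derivWithin f 𝕀 (g u) * derivWithin f 𝕀 (g v)) := by
      rw [inv_sub_inv (ne_of_gt hpu) (ne_of_gt hpv), abs_div, abs_mul,
        abs_of_pos hpu, abs_of_pos hpv]
    rw [ha]
    have hb1 : |derivWithin f 𝕀 (g v) - derivWithin f 𝕀 (g u)| ≤ C₀ * ω |g v - g u| :=
      hmod _ hgv _ hgu
    have hguv1 : |g v - g u| ≤ 1 := by
      have h1 := hgu.1; have h2 := hgu.2; have h3 := hgv.1; have h4 := hgv.2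
      rw [abs_le]; constructor <;> linarith
    have huv1 : |u - v| ≤ 1 := by
      have h1 := hu.1; have h2 := hu.2; have h3 := hv.1; have h4 := hv.2
      rw [abs_le]; constructor <;> linarith
    have hscaled : ω |g v - g u| ≤ (N:ℝ) * ω |u - v| := by
      apply hω.scale N hN1 (abs_nonneg _) hguv1 (abs_nonneg _) huv1
      have := hguv v hv u hu
      rw [abs_sub_comm u v]
      calc |g v - g u| ≤ (1/m) * |v - u| := by
            rw [div_mul_eq_mul_div, le_div_iff₀ hm0]; linarith
        _ ≤ (N:ℝ) * |v - u| := mul_le_mul_of_nonneg_right h1mN (abs_nonneg _)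
    have hωuv : 0 ≤ ω |u - v| := hω.nonneg' (abs_nonneg _) huv1
    have hmm : m^2 ≤ derivWithin f 𝕀 (g u) * derivWithin f 𝕀 (g v) := by
      have h1 := hφm _ hgu; have h2 := hφm _ hgv
      nlinarith
    calc |derivWithin f 𝕀 (g v) - derivWithin f 𝕀 (g u)|
          / (derivWithin f 𝕀 (g u) * derivWithin f 𝕀 (g v))
        ≤ (C₀ * ((N:ℝ) * ω |u - v|)) / m^2 := by
          apply div_le_div₀ (mul_nonneg hC₀.le (mul_nonneg (by positivity) hωuv)) _
            (by positivity) hmm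
          calc |derivWithin f 𝕀 (g v) - derivWithin f 𝕀 (g u)| ≤ C₀ * ω |g v - g u| := hb1
            _ ≤ C₀ * ((N:ℝ) * ω |u - v|) := mul_le_mul_of_nonneg_left hscaled hC₀.le
      _ = C₀ * (N:ℝ) / m^2 * ω |u - v| := by ring
  -- apply the one-sided bounds
  obtain ⟨Af, hAf0, hAf⟩ := side ω f g hω hsm hf hfω' hfix_f
  obtain ⟨Ag, hAg0, hAg⟩ := side ω g f hω hsm hg hgmod hfix_g
  set A : ℝ := max Af Ag with hAdef
  have hA0 : 0 < A := lt_max_of_lt_left hAf0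
  have hω1 : 0 < ω 1 := by
    have := hsm h0I h1I one_pos
    rwa [hω.map_zero] at this
  refine ⟨A/ω 1 + A + 1, by have := div_pos hA0 hω1; linarith, ?_⟩
  intro n hn h2n
  have hn0 : (0:ℝ) < n := by exact_mod_cast hn
  have hn1 : (1:ℝ) ≤ n := by exact_mod_cast hn
  have h2npos : 0 < 2/(n:ℝ) := by positivity
  obtain ⟨δ, hδmem, hδeq⟩ : ∃ δ ∈ Set.Icc (0:ℝ) 1, ω δ = 2/(n:ℝ) := by
    have hsub := intermediate_value_Icc zero_le_one hω.continuousOn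
    have hmem : 2/(n:ℝ) ∈ Set.Icc (ω 0) (ω 1) := by
      constructor
      · rw [hω.map_zero]; positivity
      · exact h2n
    obtain ⟨δ, hδ, hδeq⟩ := hsub hmem
    exact ⟨δ, hδ, hδeq⟩
  have hδ0 : 0 < δ := by
    rcases eq_or_lt_of_le hδmem.1 with heq | h
    · exfalso
      rw [← heq, hω.map_zero] at hδeq
      exact absurd hδeq.symm (ne_of_gt h2npos)
    · exact h
  have hwv : winv (2/(n:ℝ)) = δ := by rw [← hδeq]; exact hwinv δ hδmem
  have hω1n : 0 ≤ ω (1/(n:ℝ)) := hω.nonneg' (by positivity) (by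
    rw [div_le_one hn0]; exact hn1)
  set t : ℝ := (n:ℝ)*ω (1/(n:ℝ)) with htdef
  have ht0 : 0 ≤ t := by positivity
  have hAft : Af * (1 + t) ≤ A * (1 + t) :=
    mul_le_mul_of_nonneg_right (le_max_left _ _) (by linarith)
  have hAgt : Ag * (1 + t) ≤ A * (1 + t) :=
    mul_le_mul_of_nonneg_right (le_max_right _ _) (by linarith)
  have hGle : Gamma f g n ≤ ((n:ℝ)/δ) * Real.exp (A * (1 + t)) := by
    apply max_le
    · exact (hAf n hn δ hδ0 hδmem.2 hδeq).trans
        (mul_le_mul_of_nonneg_left (Real.exp_le_exp.2 hAft) (by positivity))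
    · exact (hAg n hn δ hδ0 hδmem.2 hδeq).trans
        (mul_le_mul_of_nonneg_left (Real.exp_le_exp.2 hAgt) (by positivity))
  have hGpos : 0 < Gamma f g n := by
    have h01 : derivWithin (f^[n]) 𝕀 0 = 1 := by
      rw [iter_deriv_prod hmaps hcd n h0I]
      rw [Finset.prod_congr rfl (fun k _ => by
        rw [Function.iterate_fixed hf.map_zero k, hfix_f 0 h0I hf.map_zero])]
      simp
    have h02 : (1:ℝ) ≤ supAbsDeriv (f^[n]) := by
      have := le_supAbsDeriv hmaps hcd n h0I
      rwa [h01, abs_one] at this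
    exact lt_of_lt_of_le one_pos (h02.trans (le_max_left _ _))
  have hXpos : (0:ℝ) < (n:ℝ)/δ := by positivity
  have ht1 : ω 1 ≤ t := by
    have h1 : (n:ℝ) * (1/(n:ℝ)) = 1 := by field_simp
    have := hω.nat_mul n (by positivity : (0:ℝ) ≤ 1/(n:ℝ)) (by rw [h1])
    rw [h1] at this
    exact this
  calc Real.log (Gamma f g n)
      ≤ Real.log (((n:ℝ)/δ) * Real.exp (A * (1 + t))) := Real.log_le_log hGpos hGle
    _ = Real.log ((n:ℝ)/δ) + A*(1+t) := by
        rw [Real.log_mul (ne_of_gt hXpos) (Real.exp_ne_zero _), Real.log_exp]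
    _ ≤ Real.log ((n:ℝ)/winv (2/(n:ℝ))) + (A/ω 1 + A + 1)*n*ω (1/(n:ℝ)) := by
        rw [hwv]
        have h5 : A ≤ (A/ω 1)*t := by
          rw [div_mul_eq_mul_div, le_div_iff₀ hω1]
          exact mul_le_mul_of_nonneg_left ht1 hA0.le
        have h6 : (A/ω 1 + A + 1)*n*ω (1/(n:ℝ)) = (A/ω 1)*t + A*t + t := by
          rw [htdef]; ring
        have h7 : A*(1+t) ≤ (A/ω 1)*t + A*t + t := by nlinarith
        linarith [h6 ▸ h7]
end
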